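/- arXiv:1503.01746 — 6 statements merged into one kernel-verified Lean document; each statement's English description precedes it below -/
import Mathlib

section
/- Let f : [a,b] → ℝ be a regulated function and let c > 0. Then the functions y ↦ u_c^y(f,[a,b]) and y ↦ d_c^y(f,[a,b]) from ℝ to ℝ are pointwise limits of sequences of step functions on ℝ (a step function on ℝ being a function that is piecewise constant with respect to some finite partition of ℝ into intervals); in particular both functions are Borel measurable. -/
open MeasureTheory Filter Set
open scoped ENNReal NNReal

noncomputable section

/-- The truncated variation `TTV^c(f,[a,b])`. -/
def TTV (f : ℝ → ℝ) (a b c : ℝ) : ℝ≥0∞ :=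
  ⨆ (n : ℕ) (t : Fin (n + 1) → ℝ) (_ : StrictMono t) (_ : ∀ i, t i ∈ Set.Icc a b),
    ∑ i : Fin n, ENNReal.ofReal (|f (t i.succ) - f (t i.castSucc)| - c)

/-- The upward truncated variation `UTV^c(f,[a,b])`. -/
def UTV (f : ℝ → ℝ) (a b c : ℝ) : ℝ≥0∞ :=
  ⨆ (n : ℕ) (t : Fin (n + 1) → ℝ) (_ : StrictMono t) (_ : ∀ i, t i ∈ Set.Icc a b),
    ∑ i : Fin n, ENNReal.ofReal (f (t i.succ) - f (t i.castSucc) - c)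

/-- The downward truncated variation `DTV^c(f,[a,b])`. -/
def DTV (f : ℝ → ℝ) (a b c : ℝ) : ℝ≥0∞ :=
  ⨆ (n : ℕ) (t : Fin (n + 1) → ℝ) (_ : StrictMono t) (_ : ∀ i, t i ∈ Set.Icc a b),
    ∑ i : Fin n, ENNReal.ofReal (f (t i.castSucc) - f (t i.succ) - c)

/-- The alternating sequence of hitting times used to count crossings: starting from `a`,
`crossingTimes f b p q a (n+1)` is the infimum (in `EReal`, so `inf ∅ = +∞`) of the times
`t ∈ (previous time, b]` at which `f t` satisfies `p` (for even `n`) or `q` (for odd `n`). -/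
def crossingTimes (f : ℝ → ℝ) (b : ℝ) (p q : ℝ → Prop) (a : ℝ) : ℕ → EReal
  | 0 => (a : EReal)
  | n + 1 =>
      sInf {x : EReal | ∃ t : ℝ, x = (t : EReal) ∧
        crossingTimes f b p q a n < (t : EReal) ∧ t ≤ b ∧
        (if n % 2 = 0 then p (f t) else q (f t))}

/-- `u_c^y(f,[a,b])`: the number of upcrossings by `f` of the segment `[y, y+c]` on `[a,b]`,
i.e. the largest `n` (possibly `∞`) such that `σ̃_n ≤ b`, where `σ̃₀ = a`,
`τ̃_n = inf{t ∈ (σ̃_n, b] : f t < y}` and `σ̃_{n+1} = inf{t ∈ (τ̃_n, b] : f t > y + c}`. -/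
def upcross (f : ℝ → ℝ) (a b c y : ℝ) : ℝ≥0∞ :=
  ⨆ (n : ℕ) (_ : crossingTimes f b (fun r => r < y) (fun r => y + c < r) a (2 * n) ≤ (b : EReal)),
    (n : ℝ≥0∞)

/-- `d_c^y(f,[a,b])`: the number of downcrossings by `f` of the segment `[y, y+c]` on `[a,b]`,
i.e. the largest `n` (possibly `∞`) such that `σ_n ≤ b`, where `σ₀ = a`,
`τ_n = inf{t ∈ (σ_n, b] : f t > y + c}` and `σ_{n+1} = inf{t ∈ (τ_n, b] : f t < y}`. -/
def downcross (f : ℝ → ℝ) (a b c y : ℝ) : ℝ≥0∞ :=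
  ⨆ (n : ℕ) (_ : crossingTimes f b (fun r => y + c < r) (fun r => r < y) a (2 * n) ≤ (b : EReal)),
    (n : ℝ≥0∞)

/-- A function is regulated on `[a,b]` if it has right limits on `[a,b)` and left limits
on `(a,b]`. -/
def Regulated (f : ℝ → ℝ) (a b : ℝ) : Prop :=
  (∀ t ∈ Set.Ico a b, ∃ L : ℝ, Tendsto f (nhdsWithin t (Set.Ioi t)) (nhds L)) ∧
  (∀ t ∈ Set.Ioc a b, ∃ L : ℝ, Tendsto f (nhdsWithin t (Set.Iio t)) (nhds L))

/-- A step function on `ℝ`: piecewise constant with respect to a finite partition of `ℝ`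
into intervals; equivalently, there is a finite set `s` such that the function is constant
on every interval avoiding `s`. -/
def IsStepFunction (g : ℝ → ℝ) : Prop :=
  ∃ s : Finset ℝ, ∀ x y : ℝ, x ≤ y → (∀ z ∈ Set.Icc x y, z ∉ s) → g x = g y

/-- A standard Brownian motion: continuous paths started at `0`, with independent increments,
the increment on `[s,t]` being centered Gaussian with variance `t - s`. -/
structure IsBrownianMotion {Ω : Type*} [MeasurableSpace Ω] (P : Measure Ω)
    (B : Ω → ℝ → ℝ) : Prop where
  isProb : IsProbabilityMeasure P
  cont : ∀ ω, ContinuousOn (B ω) (Set.Ici 0)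
  init : ∀ ω, B ω 0 = 0
  meas : ∀ t : ℝ, Measurable fun ω => B ω t
  indep : ∀ (n : ℕ) (t : Fin (n + 1) → ℝ), Monotone t → 0 ≤ t 0 →
    ProbabilityTheory.iIndepFun
      (fun i : Fin n => fun ω => B ω (t i.succ) - B ω (t i.castSucc)) P
  gauss : ∀ s t : ℝ, 0 ≤ s → s ≤ t →
    Measure.map (fun ω => B ω t - B ω s) P
      = ProbabilityTheory.gaussianReal 0 (Real.toNNReal (t - s))

/-- The exponential distribution with rate `v` (density `v * exp (-v*t)` on `[0,∞)`). -/
def expMeasure (v : ℝ) : Measure ℝ :=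
  volume.withDensity fun t => ENNReal.ofReal (if 0 ≤ t then v * Real.exp (-v * t) else 0)

end
noncomputable section
namespace CrossingsAux

/-! ### Alternating chains -/

/-- The chain property: `w` is a strictly increasing chain of `2n` points in `(a, b]`,
alternately below `y` (even indices) and above `z` (odd indices). -/
def ChainP (f : ℝ → ℝ) (a b y z : ℝ) (n : ℕ) (w : Fin (2*n) → ℝ) : Prop :=
  StrictMono w ∧ (∀ i, w i ∈ Set.Ioc a b) ∧
    ∀ i : Fin (2*n), if (i:ℕ) % 2 = 0 then f (w i) < y else z < f (w i)

def AltChain (f : ℝ → ℝ) (a b y z : ℝ) (n : ℕ) : Prop := ∃ w, ChainP f a b y z n w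

lemma altChain_zero (f : ℝ → ℝ) (a b y z : ℝ) : AltChain f a b y z 0 :=
  ⟨fun i => i.elim0, fun i => i.elim0, fun i => i.elim0, fun i => i.elim0⟩

lemma chainP_extend {f : ℝ → ℝ} {a b y z : ℝ} {n : ℕ} {w : Fin (2*n) → ℝ}
    (h : ChainP f a b y z n w) {s t : ℝ}
    (hws : ∀ i, w i < s) (has : a < s) (hst : s < t) (htb : t ≤ b)
    (hfs : f s < y) (hft : z < f t) :
    ∃ w' : Fin (2*(n+1)) → ℝ, ChainP f a b y z (n+1) w' ∧ (∀ i, w' i ≤ t) := by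
  obtain ⟨hmono, hmem, halt⟩ := h
  refine ⟨fun i => if h2 : (i:ℕ) < 2*n then w ⟨i, h2⟩ else if (i:ℕ) = 2*n then s else t, ⟨?_, ?_, ?_⟩, ?_⟩
  · intro i j hij
    have hj : (j : ℕ) < 2*(n+1) := j.2
    have hi : (i : ℕ) < 2*(n+1) := i.2
    have hij' : (i : ℕ) < (j : ℕ) := hij
    dsimp only
    by_cases h1 : (i:ℕ) < 2*n
    · rw [dif_pos h1]
      by_cases h2 : (j:ℕ) < 2*n
      · rw [dif_pos h2]; exact hmono (show (⟨(i:ℕ), h1⟩ : Fin (2*n)) < ⟨(j:ℕ), h2⟩ from hij')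
      · rw [dif_neg h2]
        by_cases h3 : (j:ℕ) = 2*n
        · rw [if_pos h3]; exact hws _
        · rw [if_neg h3]; exact (hws _).trans hst
    · rw [dif_neg h1]
      have hi2 : (i:ℕ) = 2*n := by omega
      rw [if_pos hi2]
      have h2 : ¬ (j:ℕ) < 2*n := by omega
      have h3 : ¬ (j:ℕ) = 2*n := by omega
      rw [dif_neg h2, if_neg h3]; exact hst
  · intro i
    dsimp only
    by_cases h1 : (i:ℕ) < 2*n
    · rw [dif_pos h1]; exact hmem _
    · rw [dif_neg h1]
      by_cases h3 : (i:ℕ) = 2*n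
      · rw [if_pos h3]; exact ⟨has, hst.le.trans htb⟩
      · rw [if_neg h3]; exact ⟨has.trans hst, htb⟩
  · intro i
    dsimp only
    by_cases h1 : (i:ℕ) < 2*n
    · rw [dif_pos h1]; exact halt ⟨(i:ℕ), h1⟩
    · rw [dif_neg h1]
      by_cases h3 : (i:ℕ) = 2*n
      · rw [if_pos h3, if_pos (by omega : (i:ℕ) % 2 = 0)]; exact hfs
      · have hi4 : (i:ℕ) = 2*n+1 := by omega
        rw [if_neg h3, if_neg (by omega : ¬ (i:ℕ) % 2 = 0)]; exact hft
  · intro i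
    dsimp only
    by_cases h1 : (i:ℕ) < 2*n
    · rw [dif_pos h1]; exact ((hws _).trans hst).le
    · rw [dif_neg h1]
      by_cases h3 : (i:ℕ) = 2*n
      · rw [if_pos h3]; exact hst.le
      · rw [if_neg h3]

/-! ### Crossing times and chains -/

section Crossing

variable {f : ℝ → ℝ} {a b c y : ℝ}

local notation "K" => crossingTimes f b (fun r => r < y) (fun r => y + c < r) a

lemma K_zero : K 0 = (a : EReal) := rfl

lemma K_mono : Monotone (K) := by
  apply monotone_nat_of_le_succ
  intro n
  apply le_sInf
  rintro x ⟨t, rfl, h1, -, -⟩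
  exact h1.le

lemma K_le_mem {n : ℕ} {t : ℝ} (h1 : K n < (t : EReal)) (h2 : t ≤ b)
    (h3 : if n % 2 = 0 then f t < y else y + c < f t) : K (n+1) ≤ (t : EReal) :=
  sInf_le ⟨t, rfl, h1, h2, h3⟩

lemma K_extract {n : ℕ} {x : EReal} (h : K (n+1) < x) :
    ∃ t : ℝ, K n < (t : EReal) ∧ t ≤ b ∧
      (if n % 2 = 0 then f t < y else y + c < f t) ∧ (t : EReal) < x := by
  obtain ⟨e, he, hlt⟩ := sInf_lt_iff.mp h
  obtain ⟨t, rfl, h1, h2, h3⟩ := he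
  exact ⟨t, h1, h2, h3, hlt⟩

lemma K_extract_le_b {n : ℕ} (h : K (n+1) ≤ (b : EReal)) :
    ∃ t : ℝ, K n < (t : EReal) ∧ t ≤ b ∧
      (if n % 2 = 0 then f t < y else y + c < f t) := by
  obtain ⟨t, h1, h2, h3, -⟩ := K_extract (h.trans_lt (EReal.coe_lt_top b))
  exact ⟨t, h1, h2, h3⟩

lemma chain_of_K_lt : ∀ n : ℕ, ∀ r : ℝ, K (2*n) < (r : EReal) →
    ∃ w : Fin (2*n) → ℝ, ChainP f a b y (y+c) n w ∧ ∀ i, w i < r := by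
  intro n
  induction n with
  | zero => exact fun r _ => ⟨fun i => i.elim0, ⟨fun i => i.elim0, fun i => i.elim0, fun i => i.elim0⟩, fun i => i.elim0⟩
  | succ n ih =>
    intro r h
    have h2 : K ((2*n+1)+1) < (r : EReal) := by
      have : 2*(n+1) = (2*n+1)+1 := by ring
      rwa [this] at h
    obtain ⟨t, ht1, ht2, ht3, ht4⟩ := K_extract h2
    rw [if_neg (by omega : ¬ (2*n+1) % 2 = 0)] at ht3
    obtain ⟨s, hs1, hs2, hs3, hs4⟩ := K_extract ht1
    rw [if_pos (by omega : (2*n) % 2 = 0)] at hs3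
    obtain ⟨w, hw, hwlt⟩ := ih s hs1
    have has : a < s := by
      have h0 : (K 0) ≤ K (2*n) := K_mono (Nat.zero_le _)
      rw [K_zero] at h0
      have : (a : EReal) < (s : EReal) := lt_of_le_of_lt h0 hs1
      exact_mod_cast this
    have hst : s < t := by exact_mod_cast hs4
    obtain ⟨w', hw', hle⟩ := chainP_extend hw hwlt has hst ht2 hs3 ht3
    have htr : t < r := by exact_mod_cast ht4
    exact ⟨w', hw', fun i => (hle i).trans_lt htr⟩

lemma K_le_of_chain {n : ℕ} {w : Fin (2*n) → ℝ} (hw : ChainP f a b y (y+c) n w) :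
    ∀ m : ℕ, ∀ hm : m < 2*n, K (m+1) ≤ ((w ⟨m, hm⟩ : ℝ) : EReal) := by
  obtain ⟨hmono, hmem, halt⟩ := hw
  intro m
  induction m with
  | zero =>
    intro hm
    apply K_le_mem
    · rw [K_zero]; exact_mod_cast (hmem ⟨0, hm⟩).1
    · exact (hmem ⟨0, hm⟩).2
    · rw [if_pos (by omega : 0 % 2 = 0)]
      have := halt ⟨0, hm⟩
      rwa [if_pos (by norm_num : (((⟨0, hm⟩ : Fin (2*n)) : ℕ)) % 2 = 0)] at this
  | succ m ih =>
    intro hm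
    have hm' : m < 2*n := by omega
    apply K_le_mem
    · refine lt_of_le_of_lt (ih hm') ?_
      exact_mod_cast hmono (show (⟨m, hm'⟩ : Fin (2*n)) < ⟨m+1, hm⟩ from by simp [Fin.lt_def])
    · exact (hmem _).2
    · exact halt ⟨m+1, hm⟩

lemma altChain_iff_K (hab : a ≤ b) (n : ℕ) :
    AltChain f a b y (y+c) n ↔ K (2*n) ≤ (b : EReal) := by
  constructor
  · rintro ⟨w, hw⟩
    cases n with
    | zero => rw [show 2*0 = 0 from rfl, K_zero]; exact EReal.coe_le_coe_iff.mpr hab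
    | succ n =>
      have h := K_le_of_chain hw (2*n+1) (by omega)
      have : 2*(n+1) = (2*n+1)+1 := by ring
      rw [this]
      exact h.trans (EReal.coe_le_coe_iff.mpr (hw.2.1 _).2)
  · intro h
    cases n with
    | zero => exact altChain_zero f a b y (y+c)
    | succ n =>
      have h2 : K ((2*n+1)+1) ≤ (b : EReal) := by
        have : 2*(n+1) = (2*n+1)+1 := by ring
        rwa [this] at h
      obtain ⟨t, ht1, ht2, ht3⟩ := K_extract_le_b h2
      rw [if_neg (by omega : ¬ (2*n+1) % 2 = 0)] at ht3
      obtain ⟨s, hs1, hs2, hs3, hs4⟩ := K_extract ht1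
      rw [if_pos (by omega : (2*n) % 2 = 0)] at hs3
      obtain ⟨w, hw, hwlt⟩ := chain_of_K_lt n s hs1
      have has : a < s := by
        have h0 : (K 0) ≤ K (2*n) := K_mono (Nat.zero_le _)
        rw [K_zero] at h0
        have : (a : EReal) < (s : EReal) := lt_of_le_of_lt h0 hs1
        exact_mod_cast this
      have hst : s < t := by exact_mod_cast hs4
      obtain ⟨w', hw', -⟩ := chainP_extend hw hwlt has hst ht2 hs3 ht3
      exact ⟨w', hw'⟩

end Crossing

/-! ### Uniform bound on the number of alternations -/

lemma osc_of_tendsto {f : ℝ → ℝ} {x L c : ℝ} (hc : 0 < c)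
    (h : Tendsto f (nhdsWithin x (Set.Ioi x)) (nhds L)) :
    ∃ δ > 0, ∀ u v : ℝ, u ∈ Ioo x (x+δ) → v ∈ Ioo x (x+δ) → |f u - f v| ≤ c/2 := by
  have h4 : (0:ℝ) < c/4 := by linarith
  have hev : ∀ᶠ v in nhdsWithin x (Set.Ioi x), dist (f v) L < c/4 :=
    (Metric.tendsto_nhds.mp h) (c/4) h4
  obtain ⟨u0, hu0, hsub⟩ := mem_nhdsGT_iff_exists_Ioo_subset.mp hev
  refine ⟨u0 - x, sub_pos.mpr hu0, ?_⟩
  intro u v hu hv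
  have hu' : dist (f u) L < c/4 := hsub (by constructor <;> [exact hu.1; linarith [hu.2]])
  have hv' : dist (f v) L < c/4 := hsub (by constructor <;> [exact hv.1; linarith [hv.2]])
  rw [Real.dist_eq] at hu' hv'
  rw [abs_sub_lt_iff] at hu' hv'
  rw [abs_sub_le_iff]
  constructor <;> linarith

lemma osc_of_tendsto_left {f : ℝ → ℝ} {x L c : ℝ} (hc : 0 < c)
    (h : Tendsto f (nhdsWithin x (Set.Iio x)) (nhds L)) :
    ∃ δ > 0, ∀ u v : ℝ, u ∈ Ioo (x-δ) x → v ∈ Ioo (x-δ) x → |f u - f v| ≤ c/2 := by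
  have h4 : (0:ℝ) < c/4 := by linarith
  have hev : ∀ᶠ v in nhdsWithin x (Set.Iio x), dist (f v) L < c/4 :=
    (Metric.tendsto_nhds.mp h) (c/4) h4
  obtain ⟨u0, hu0, hsub⟩ := mem_nhdsLT_iff_exists_Ioo_subset.mp hev
  refine ⟨x - u0, sub_pos.mpr hu0, ?_⟩
  intro u v hu hv
  have hu' : dist (f u) L < c/4 := hsub (by constructor <;> [linarith [hu.1]; exact hu.2])
  have hv' : dist (f v) L < c/4 := hsub (by constructor <;> [linarith [hv.1]; exact hv.2])
  rw [Real.dist_eq] at hu' hv'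
  rw [abs_sub_lt_iff] at hu' hv'
  rw [abs_sub_le_iff]
  constructor <;> linarith

lemma local_control {f : ℝ → ℝ} {a b c : ℝ} (hf : Regulated f a b) (hc : 0 < c) :
    ∀ x ∈ Icc a b, ∃ δ > 0,
      (∀ u v : ℝ, u ∈ Ioo (x-δ) x ∩ Ioc a b → v ∈ Ioo (x-δ) x ∩ Ioc a b → |f u - f v| ≤ c/2) ∧
      (∀ u v : ℝ, u ∈ Ioo x (x+δ) ∩ Ioc a b → v ∈ Ioo x (x+δ) ∩ Ioc a b → |f u - f v| ≤ c/2) := by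
  intro x hx
  have hleft : ∃ δ > 0, ∀ u v : ℝ,
      u ∈ Ioo (x-δ) x ∩ Ioc a b → v ∈ Ioo (x-δ) x ∩ Ioc a b → |f u - f v| ≤ c/2 := by
    rcases eq_or_lt_of_le hx.1 with h | h
    · refine ⟨1, one_pos, ?_⟩
      rintro u v ⟨hu1, hu2⟩ -
      exact absurd (h ▸ hu2.1) (not_lt.mpr hu1.2.le)
    · obtain ⟨L, hL⟩ := hf.2 x ⟨h, hx.2⟩
      obtain ⟨δ, hδ, hosc⟩ := osc_of_tendsto_left hc hL
      exact ⟨δ, hδ, fun u v hu hv => hosc u v hu.1 hv.1⟩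
  have hright : ∃ δ > 0, ∀ u v : ℝ,
      u ∈ Ioo x (x+δ) ∩ Ioc a b → v ∈ Ioo x (x+δ) ∩ Ioc a b → |f u - f v| ≤ c/2 := by
    rcases eq_or_lt_of_le hx.2 with h | h
    · refine ⟨1, one_pos, ?_⟩
      rintro u v ⟨hu1, hu2⟩ -
      exact absurd (h ▸ hu1.1) (not_lt.mpr hu2.2)
    · obtain ⟨L, hL⟩ := hf.1 x ⟨hx.1, h⟩
      obtain ⟨δ, hδ, hosc⟩ := osc_of_tendsto hc hL
      exact ⟨δ, hδ, fun u v hu hv => hosc u v hu.1 hv.1⟩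
  obtain ⟨δ₁, hδ₁, h₁⟩ := hleft
  obtain ⟨δ₂, hδ₂, h₂⟩ := hright
  refine ⟨min δ₁ δ₂, lt_min hδ₁ hδ₂, ?_, ?_⟩
  · intro u v hu hv
    apply h₁ u v
    · exact ⟨⟨by linarith [hu.1.1, min_le_left δ₁ δ₂], hu.1.2⟩, hu.2⟩
    · exact ⟨⟨by linarith [hv.1.1, min_le_left δ₁ δ₂], hv.1.2⟩, hv.2⟩
  · intro u v hu hv
    apply h₂ u v
    · exact ⟨⟨hu.1.1, by linarith [hu.1.2, min_le_right δ₁ δ₂]⟩, hu.2⟩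
    · exact ⟨⟨hv.1.1, by linarith [hv.1.2, min_le_right δ₁ δ₂]⟩, hv.2⟩

lemma exists_bound {f : ℝ → ℝ} {a b c : ℝ} (hf : Regulated f a b) (hc : 0 < c) :
    ∃ N : ℕ, ∀ (y : ℝ) (n : ℕ) (w : Fin (2*n) → ℝ), ChainP f a b y (y+c) n w → n ≤ N := by
  choose! δ hδpos hosc using local_control hf hc
  have hnhds : ∀ x ∈ Icc a b, Ioo (x - δ x) (x + δ x) ∈ nhds x := by
    intro x hx
    exact Ioo_mem_nhds (by linarith [hδpos x hx]) (by linarith [hδpos x hx])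
  obtain ⟨F, hFmem, hFcov⟩ := isCompact_Icc.elim_nhds_subcover
    (fun x => Ioo (x - δ x) (x + δ x)) hnhds
  refine ⟨3 * F.card, ?_⟩
  intro y n w hw
  obtain ⟨hmono, hmem, halt⟩ := hw
  have hpt : ∀ i : Fin (2*n), ∃ x ∈ F, w i ∈ Ioo (x - δ x) (x + δ x) := by
    intro i
    have hwi : w i ∈ Icc a b := ⟨(hmem i).1.le, (hmem i).2⟩
    rcases mem_iUnion₂.mp (hFcov hwi) with ⟨x, hxF, hx⟩
    exact ⟨x, hxF, hx⟩
  choose x hxF hxmem using hpt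
  set Φ : Fin (2*n) → {z // z ∈ F} × Fin 3 := fun i =>
    (⟨x i, hxF i⟩, if w i < x i then 0 else if w i = x i then 1 else 2) with hΦ
  have hgap : ∀ i j : Fin (2*n), (i:ℕ)+1 = (j:ℕ) → ¬ |f (w i) - f (w j)| ≤ c/2 := by
    intro i j hij hle
    rw [abs_sub_le_iff] at hle
    have hi := halt i
    have hj := halt j
    by_cases hpar : (i:ℕ) % 2 = 0
    · rw [if_pos hpar] at hi
      rw [if_neg (by omega : ¬ (j:ℕ) % 2 = 0)] at hj
      linarith [hle.2]
    · rw [if_neg hpar] at hi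
      rw [if_pos (by omega : (j:ℕ) % 2 = 0)] at hj
      linarith [hle.1]
  have hinj : Function.Injective Φ := by
    intro i j hij
    by_contra hne
    wlog hlt : i < j generalizing i j
    · exact this hij.symm (Ne.symm hne) ((Ne.lt_or_gt hne).resolve_left hlt)
    · have hx1 : x i = x j := congrArg (fun p => (p.1 : ℝ)) hij
      have hx2 : (if w i < x i then (0:Fin 3) else if w i = x i then 1 else 2)
          = (if w j < x j then 0 else if w j = x j then 1 else 2) := congrArg Prod.snd hij
      have hk2 : (i:ℕ)+1 < 2*n := by omega
      set k : Fin (2*n) := ⟨(i:ℕ)+1, hk2⟩ with hk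
      have hik : i < k := by simp [hk, Fin.lt_def]
      have hkj : k ≤ j := by simp only [Fin.le_def, hk]; omega
      have hwik : w i < w k := hmono hik
      have hwkj : w k ≤ w j := hmono.monotone hkj
      have hwij : w i < w j := hmono hlt
      have hxIcc : x i ∈ Icc a b := hFmem _ (hxF i)
      have hmi := hxmem i
      have hmj := hxmem j
      rw [← hx1] at hmj
      rcases lt_trichotomy (w i) (x i) with h1 | h1 | h1
      · have h2 : w j < x i := by
          by_contra h3
          rw [if_pos h1, ← hx1, if_neg h3] at hx2
          split_ifs at hx2 <;> exact absurd hx2 (by decide)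
        have hui : w i ∈ Ioo (x i - δ (x i)) (x i) ∩ Ioc a b := ⟨⟨hmi.1, h1⟩, hmem i⟩
        have huk : w k ∈ Ioo (x i - δ (x i)) (x i) ∩ Ioc a b :=
          ⟨⟨hmi.1.trans hwik, lt_of_le_of_lt hwkj h2⟩, hmem k⟩
        exact hgap i k rfl ((hosc (x i) hxIcc).1 _ _ hui huk)
      · rw [if_neg (by rw [h1]; exact lt_irrefl _), if_pos h1, ← hx1] at hx2
        have h2 : w j = x i := by
          by_cases h4 : w j < x i
          · rw [if_pos h4] at hx2; exact absurd hx2 (by decide)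
          · by_cases h5 : w j = x i
            · exact h5
            · rw [if_neg h4, if_neg h5] at hx2; exact absurd hx2 (by decide)
        rw [h1, h2] at hwij
        exact lt_irrefl _ hwij
      · have h2 : x i < w j := h1.trans hwij
        have h3 : ¬ w j < x i := not_lt.mpr h2.le
        have hui : w i ∈ Ioo (x i) (x i + δ (x i)) ∩ Ioc a b := ⟨⟨h1, hmi.2⟩, hmem i⟩
        have huk : w k ∈ Ioo (x i) (x i + δ (x i)) ∩ Ioc a b :=
          ⟨⟨h1.trans hwik, lt_of_le_of_lt hwkj hmj.2⟩, hmem k⟩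
        exact hgap i k rfl ((hosc (x i) hxIcc).2 _ _ hui huk)
  have hcard := Fintype.card_le_of_injective Φ hinj
  simp only [Fintype.card_fin, Fintype.card_prod, Fintype.card_coe] at hcard
  omega

end CrossingsAux
end
noncomputable section
namespace CrossingsAux

/-! ### Spike sets and the countable sample set -/

def SpikeLow (f : ℝ → ℝ) (a b : ℝ) (q : ℚ) : Set ℝ :=
  {u | u ∈ Ioo a b ∧ f u < q ∧ ∀ᶠ v in nhdsWithin u ({u}ᶜ), v ∈ Ioo a b → (q:ℝ) ≤ f v}

def SpikeHigh (f : ℝ → ℝ) (a b : ℝ) (q : ℚ) : Set ℝ :=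
  {u | u ∈ Ioo a b ∧ (q:ℝ) < f u ∧ ∀ᶠ v in nhdsWithin u ({u}ᶜ), v ∈ Ioo a b → f v ≤ q}

/-- The countable "sample" set. -/
def SampleSet (f : ℝ → ℝ) (a b : ℝ) : Set ℝ :=
  ((⋃ q : ℚ, SpikeLow f a b q ∪ SpikeHigh f a b q) ∪ {b}) ∪
    (Ioo a b ∩ Set.range ((↑) : ℚ → ℝ))

lemma countable_of_isolated {S : Set ℝ}
    (h : ∀ u ∈ S, ∃ ε > 0, ∀ v ∈ S, |v - u| < ε → v = u) : S.Countable := by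
  have hsub : S ⊆ ⋃ p : ℚ × ℚ, {u | u ∈ S ∧ (p.1:ℝ) < u ∧ u < (p.2:ℝ) ∧
      ∀ v ∈ S, (p.1:ℝ) < v → v < (p.2:ℝ) → v = u} := by
    intro u hu
    obtain ⟨ε, hε, hiso⟩ := h u hu
    obtain ⟨p, hp1, hp2⟩ := exists_rat_btwn (show u - ε < u by linarith)
    obtain ⟨r, hr1, hr2⟩ := exists_rat_btwn (show u < u + ε by linarith)
    refine mem_iUnion.mpr ⟨(p, r), hu, hp2, hr1, ?_⟩
    intro v hv h1 h2
    exact hiso v hv (abs_sub_lt_iff.mpr ⟨by linarith, by linarith⟩)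
  refine Set.Countable.mono hsub (countable_iUnion fun p => ?_)
  apply Set.Subsingleton.countable
  intro v hv v' hv'
  exact hv'.2.2.2 v hv.1 hv.2.1 hv.2.2.1

lemma spikeLow_countable (f : ℝ → ℝ) (a b : ℝ) (q : ℚ) : (SpikeLow f a b q).Countable := by
  apply countable_of_isolated
  rintro u ⟨hu1, hu2, hu3⟩
  rw [eventually_nhdsWithin_iff, Metric.eventually_nhds_iff] at hu3
  obtain ⟨ε, hε, hball⟩ := hu3
  refine ⟨ε, hε, ?_⟩
  rintro v ⟨hv1, hv2, -⟩ hdist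
  by_contra hne
  have := hball (show dist v u < ε by rwa [Real.dist_eq]) hne hv1
  linarith

lemma spikeHigh_countable (f : ℝ → ℝ) (a b : ℝ) (q : ℚ) : (SpikeHigh f a b q).Countable := by
  apply countable_of_isolated
  rintro u ⟨hu1, hu2, hu3⟩
  rw [eventually_nhdsWithin_iff, Metric.eventually_nhds_iff] at hu3
  obtain ⟨ε, hε, hball⟩ := hu3
  refine ⟨ε, hε, ?_⟩
  rintro v ⟨hv1, hv2, -⟩ hdist
  by_contra hne
  have := hball (show dist v u < ε by rwa [Real.dist_eq]) hne hv1
  linarith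

lemma sampleSet_countable (f : ℝ → ℝ) (a b : ℝ) : (SampleSet f a b).Countable := by
  refine (Set.Countable.union (Set.Countable.union ?_ (countable_singleton b)) ?_)
  · exact countable_iUnion fun q => ((spikeLow_countable f a b q).union (spikeHigh_countable f a b q))
  · exact (Set.countable_range ((↑) : ℚ → ℝ)).mono inter_subset_right

/-- Either there is a rational point near `u` (inside the window `(α,β)` and inside `(a,b)`)
where `f` is below `y`, or `u` is a low spike. -/
lemma rat_or_spike_low {f : ℝ → ℝ} {a b y u α β : ℝ} (hf : Regulated f a b)
    (hu : u ∈ Ioo a b) (hα : α < u) (hβ : u < β) (hfu : f u < y) :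
    (∃ q : ℚ, u ∈ SpikeLow f a b q) ∨
    (∃ r : ℚ, (r:ℝ) ∈ Ioo a b ∧ (r:ℝ) ∈ Ioo α β ∧ f r < y) := by
  obtain ⟨L, hL⟩ := hf.1 u ⟨hu.1.le, hu.2⟩
  obtain ⟨L', hL'⟩ := hf.2 u ⟨hu.1, hu.2.le⟩
  by_cases hLy : L < y
  · have hev : ∀ᶠ v in nhdsWithin u (Set.Ioi u), f v < y := by
      filter_upwards [(Metric.tendsto_nhds.mp hL) (y - L) (by linarith)] with v hv
      rw [Real.dist_eq, abs_sub_lt_iff] at hv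
      linarith [hv.1]
    obtain ⟨u₀, hu₀, hsub⟩ := mem_nhdsGT_iff_exists_Ioo_subset.mp hev
    have hm : u < min u₀ (min β b) := lt_min hu₀ (lt_min hβ hu.2)
    obtain ⟨r, hr1, hr2⟩ := exists_rat_btwn hm
    refine Or.inr ⟨r, ⟨hu.1.trans hr1, lt_of_lt_of_le hr2 (le_trans (min_le_right _ _) (min_le_right _ _))⟩,
      ⟨hα.trans hr1, lt_of_lt_of_le hr2 (le_trans (min_le_right _ _) (min_le_left _ _))⟩, ?_⟩
    exact hsub ⟨hr1, lt_of_lt_of_le hr2 (min_le_left _ _)⟩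
  · by_cases hLy' : L' < y
    · have hev : ∀ᶠ v in nhdsWithin u (Set.Iio u), f v < y := by
        filter_upwards [(Metric.tendsto_nhds.mp hL') (y - L') (by linarith)] with v hv
        rw [Real.dist_eq, abs_sub_lt_iff] at hv
        linarith [hv.1]
      obtain ⟨u₀, hu₀, hsub⟩ := mem_nhdsLT_iff_exists_Ioo_subset.mp hev
      have hu₀' : u₀ < u := hu₀
      have hm : max u₀ (max α a) < u := max_lt hu₀' (max_lt hα hu.1)
      obtain ⟨r, hr1, hr2⟩ := exists_rat_btwn hm
      refine Or.inr ⟨r, ⟨by linarith [le_max_right α a, le_max_right u₀ (max α a)], hr2.trans hu.2⟩,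
        ⟨by linarith [le_max_left α a, le_max_right u₀ (max α a)], hr2.trans hβ⟩, ?_⟩
      exact hsub ⟨lt_of_le_of_lt (le_max_left _ _) hr1, hr2⟩
    · push_neg at hLy hLy'
      obtain ⟨q, hq1, hq2⟩ := exists_rat_btwn hfu
      refine Or.inl ⟨q, hu, hq1, ?_⟩
      have hevr : ∀ᶠ v in nhdsWithin u (Set.Ioi u), (q:ℝ) ≤ f v := by
        filter_upwards [(Metric.tendsto_nhds.mp hL) (y - q) (by linarith)] with v hv
        rw [Real.dist_eq, abs_sub_lt_iff] at hv
        linarith [hv.2]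
      have hevl : ∀ᶠ v in nhdsWithin u (Set.Iio u), (q:ℝ) ≤ f v := by
        filter_upwards [(Metric.tendsto_nhds.mp hL') (y - q) (by linarith)] with v hv
        rw [Real.dist_eq, abs_sub_lt_iff] at hv
        linarith [hv.2]
      rw [show ({u}ᶜ : Set ℝ) = Set.Iio u ∪ Set.Ioi u by
        ext v
        simp only [mem_compl_iff, mem_singleton_iff, mem_union, mem_Iio, mem_Ioi]
        exact ⟨fun h => (Ne.lt_or_gt h), fun h => h.elim ne_of_lt ne_of_gt⟩, nhdsWithin_union]
      rw [eventually_sup]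
      exact ⟨hevl.mono fun v hv _ => hv, hevr.mono fun v hv _ => hv⟩

lemma rat_or_spike_high {f : ℝ → ℝ} {a b z u α β : ℝ} (hf : Regulated f a b)
    (hu : u ∈ Ioo a b) (hα : α < u) (hβ : u < β) (hfu : z < f u) :
    (∃ q : ℚ, u ∈ SpikeHigh f a b q) ∨
    (∃ r : ℚ, (r:ℝ) ∈ Ioo a b ∧ (r:ℝ) ∈ Ioo α β ∧ z < f r) := by
  obtain ⟨L, hL⟩ := hf.1 u ⟨hu.1.le, hu.2⟩
  obtain ⟨L', hL'⟩ := hf.2 u ⟨hu.1, hu.2.le⟩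
  by_cases hLy : z < L
  · have hev : ∀ᶠ v in nhdsWithin u (Set.Ioi u), z < f v := by
      filter_upwards [(Metric.tendsto_nhds.mp hL) (L - z) (by linarith)] with v hv
      rw [Real.dist_eq, abs_sub_lt_iff] at hv
      linarith [hv.2]
    obtain ⟨u₀, hu₀, hsub⟩ := mem_nhdsGT_iff_exists_Ioo_subset.mp hev
    have hm : u < min u₀ (min β b) := lt_min hu₀ (lt_min hβ hu.2)
    obtain ⟨r, hr1, hr2⟩ := exists_rat_btwn hm
    refine Or.inr ⟨r, ⟨hu.1.trans hr1, lt_of_lt_of_le hr2 (le_trans (min_le_right _ _) (min_le_right _ _))⟩,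
      ⟨hα.trans hr1, lt_of_lt_of_le hr2 (le_trans (min_le_right _ _) (min_le_left _ _))⟩, ?_⟩
    exact hsub ⟨hr1, lt_of_lt_of_le hr2 (min_le_left _ _)⟩
  · by_cases hLy' : z < L'
    · have hev : ∀ᶠ v in nhdsWithin u (Set.Iio u), z < f v := by
        filter_upwards [(Metric.tendsto_nhds.mp hL') (L' - z) (by linarith)] with v hv
        rw [Real.dist_eq, abs_sub_lt_iff] at hv
        linarith [hv.2]
      obtain ⟨u₀, hu₀, hsub⟩ := mem_nhdsLT_iff_exists_Ioo_subset.mp hev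
      have hu₀' : u₀ < u := hu₀
      have hm : max u₀ (max α a) < u := max_lt hu₀' (max_lt hα hu.1)
      obtain ⟨r, hr1, hr2⟩ := exists_rat_btwn hm
      refine Or.inr ⟨r, ⟨by linarith [le_max_right α a, le_max_right u₀ (max α a)], hr2.trans hu.2⟩,
        ⟨by linarith [le_max_left α a, le_max_right u₀ (max α a)], hr2.trans hβ⟩, ?_⟩
      exact hsub ⟨lt_of_le_of_lt (le_max_left _ _) hr1, hr2⟩
    · push_neg at hLy hLy'
      obtain ⟨q, hq1, hq2⟩ := exists_rat_btwn hfu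
      refine Or.inl ⟨q, hu, hq2, ?_⟩
      have hevr : ∀ᶠ v in nhdsWithin u (Set.Ioi u), f v ≤ (q:ℝ) := by
        filter_upwards [(Metric.tendsto_nhds.mp hL) (q - z) (by exact_mod_cast by linarith)] with v hv
        rw [Real.dist_eq, abs_sub_lt_iff] at hv
        linarith [hv.1]
      have hevl : ∀ᶠ v in nhdsWithin u (Set.Iio u), f v ≤ (q:ℝ) := by
        filter_upwards [(Metric.tendsto_nhds.mp hL') (q - z) (by exact_mod_cast by linarith)] with v hv
        rw [Real.dist_eq, abs_sub_lt_iff] at hv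
        linarith [hv.1]
      rw [show ({u}ᶜ : Set ℝ) = Set.Iio u ∪ Set.Ioi u by
        ext v
        simp only [mem_compl_iff, mem_singleton_iff, mem_union, mem_Iio, mem_Ioi]
        exact ⟨fun h => (Ne.lt_or_gt h), fun h => h.elim ne_of_lt ne_of_gt⟩, nhdsWithin_union]
      rw [eventually_sup]
      exact ⟨hevl.mono fun v hv _ => hv, hevr.mono fun v hv _ => hv⟩

/-! ### Replacing a chain by a chain through sample points -/

lemma chain_replace {f : ℝ → ℝ} {a b : ℝ} (hf : Regulated f a b)
    {g : ℕ → ℝ} (hg : SampleSet f a b = Set.range g)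
    {y z : ℝ} {n : ℕ} {w : Fin (2*n) → ℝ} (hw : ChainP f a b y z n w) :
    ∃ M : ℕ, ∀ m ≥ M, ∃ w' : Fin (2*n) → ℝ, ChainP f a b y z n w' ∧
      ∀ i, w' i ∈ (Finset.range (m+1)).image g := by
  obtain ⟨hmono, hmem, halt⟩ := hw
  rcases Nat.eq_zero_or_pos n with hn | hn
  · subst hn
    exact ⟨0, fun m _ => ⟨fun i => i.elim0,
      ⟨fun i => i.elim0, fun i => i.elim0, fun i => i.elim0⟩, fun i => i.elim0⟩⟩
  have h2n : 0 < 2*n := by omega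
  set lo : Fin (2*n) → ℝ := fun i =>
    if h : (i:ℕ) = 0 then (a + w i)/2 else (w ⟨(i:ℕ)-1, by omega⟩ + w i)/2 with hlo_def
  set hi : Fin (2*n) → ℝ := fun i =>
    if h : (i:ℕ)+1 < 2*n then (w i + w ⟨(i:ℕ)+1, h⟩) / 2 else b+1 with hhi_def
  have hlo : ∀ i, lo i < w i := by
    intro i
    simp only [hlo_def]
    split_ifs with h
    · linarith [(hmem i).1]
    · have : w ⟨(i:ℕ)-1, by omega⟩ < w i := hmono (by simp only [Fin.lt_def]; omega)
      linarith
  have hhi : ∀ i, w i < hi i := by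
    intro i
    simp only [hhi_def]
    split_ifs with h
    · have : w i < w ⟨(i:ℕ)+1, h⟩ := hmono (by simp only [Fin.lt_def]; omega)
      linarith
    · linarith [(hmem i).2]
  have horder : ∀ i j : Fin (2*n), i < j → hi i ≤ lo j := by
    intro i j hij
    have hij' : (i:ℕ) < (j:ℕ) := hij
    have hj2 : (j:ℕ) < 2*n := j.2
    simp only [hlo_def, hhi_def]
    rw [dif_pos (show (i:ℕ)+1 < 2*n by omega), dif_neg (show ¬(j:ℕ) = 0 by omega)]
    have h1 : w i ≤ w ⟨(j:ℕ)-1, by omega⟩ := hmono.monotone (by simp only [Fin.le_def]; omega)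
    have h2 : w ⟨(i:ℕ)+1, by omega⟩ ≤ w j := hmono.monotone (by simp only [Fin.le_def]; omega)
    linarith
  have hrep : ∀ i : Fin (2*n), ∃ k : ℕ, g k ∈ Ioc a b ∧ lo i < g k ∧ g k < hi i ∧
      (if (i:ℕ) % 2 = 0 then f (g k) < y else z < f (g k)) := by
    intro i
    by_cases hE : w i ∈ Set.range g
    · obtain ⟨k, hk⟩ := hE
      refine ⟨k, ?_, ?_, ?_, ?_⟩ <;> rw [hk]
      · exact hmem i
      · exact hlo i
      · exact hhi i
      · exact halt i
    · have hne_b : w i ≠ b := by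
        intro h
        exact hE (hg ▸ (Or.inl (Or.inr (mem_singleton_iff.mpr h))))
      have hub : w i ∈ Ioo a b := ⟨(hmem i).1, lt_of_le_of_ne (hmem i).2 hne_b⟩
      by_cases hpar : (i:ℕ) % 2 = 0
      · have hfu : f (w i) < y := by have := halt i; rwa [if_pos hpar] at this
        rcases rat_or_spike_low hf hub (hlo i) (hhi i) hfu with ⟨q, hq⟩ | ⟨r, hr1, hr2, hr3⟩
        · exact absurd (hg ▸ (Or.inl (Or.inl (mem_iUnion.mpr ⟨q, Or.inl hq⟩)))) hE
        · have : (r:ℝ) ∈ SampleSet f a b := Or.inr ⟨hr1, ⟨r, rfl⟩⟩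
          rw [hg] at this
          obtain ⟨k, hk⟩ := this
          refine ⟨k, ?_, ?_, ?_, ?_⟩ <;> rw [hk]
          · exact ⟨hr1.1, hr1.2.le⟩
          · exact hr2.1
          · exact hr2.2
          · rw [if_pos hpar]; exact hr3
      · have hfu : z < f (w i) := by have := halt i; rwa [if_neg hpar] at this
        rcases rat_or_spike_high hf hub (hlo i) (hhi i) hfu with ⟨q, hq⟩ | ⟨r, hr1, hr2, hr3⟩
        · exact absurd (hg ▸ (Or.inl (Or.inl (mem_iUnion.mpr ⟨q, Or.inr hq⟩)))) hE
        · have : (r:ℝ) ∈ SampleSet f a b := Or.inr ⟨hr1, ⟨r, rfl⟩⟩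
          rw [hg] at this
          obtain ⟨k, hk⟩ := this
          refine ⟨k, ?_, ?_, ?_, ?_⟩ <;> rw [hk]
          · exact ⟨hr1.1, hr1.2.le⟩
          · exact hr2.1
          · exact hr2.2
          · rw [if_neg hpar]; exact hr3
  choose k hk1 hk2 hk3 hk4 using hrep
  refine ⟨Finset.univ.sup k, fun m hm => ?_⟩
  refine ⟨fun i => g (k i), ⟨?_, fun i => hk1 i, fun i => hk4 i⟩, fun i => ?_⟩
  · intro i j hij
    calc g (k i) < hi i := hk3 i
    _ ≤ lo j := horder i j hij
    _ < g (k j) := hk2 j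
  · refine Finset.mem_image.mpr ⟨k i, Finset.mem_range.mpr ?_, rfl⟩
    have := Finset.le_sup (f := k) (Finset.mem_univ i)
    omega

end CrossingsAux
end
noncomputable section
namespace CrossingsAux

/-! ### Counting chains through a finite sample set -/

def chainsIn (f : ℝ → ℝ) (a b y z : ℝ) (T : Finset ℝ) : Set ℕ :=
  {n | ∃ w, ChainP f a b y z n w ∧ ∀ i, w i ∈ T}

lemma zero_mem_chainsIn (f : ℝ → ℝ) (a b y z : ℝ) (T : Finset ℝ) :
    0 ∈ chainsIn f a b y z T :=
  ⟨fun i => i.elim0, ⟨fun i => i.elim0, fun i => i.elim0, fun i => i.elim0⟩, fun i => i.elim0⟩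

lemma chainsIn_subset (f : ℝ → ℝ) (a b y z : ℝ) (T : Finset ℝ) :
    chainsIn f a b y z T ⊆ {n | AltChain f a b y z n} := by
  rintro n ⟨w, hw, -⟩
  exact ⟨w, hw⟩

lemma isStep_countIn (f : ℝ → ℝ) (a b c : ℝ) (T : Finset ℝ) :
    IsStepFunction (fun y => ((sSup (chainsIn f a b y (y+c) T) : ℕ) : ℝ)) := by
  refine ⟨T.image f ∪ T.image (fun t => f t - c), ?_⟩
  intro x y hxy hdisj
  have hset : chainsIn f a b x (x+c) T = chainsIn f a b y (y+c) T := by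
    ext n
    constructor
    · rintro ⟨w, ⟨h1, h2, h3⟩, h4⟩
      refine ⟨w, ⟨h1, h2, fun i => ?_⟩, h4⟩
      have h3i := h3 i
      split_ifs with hp
      · rw [if_pos hp] at h3i
        exact h3i.trans_le hxy
      · rw [if_neg hp] at h3i
        by_contra hcon
        push_neg at hcon
        exact hdisj (f (w i) - c) ⟨by linarith, by linarith⟩
          (Finset.mem_union_right _ (Finset.mem_image_of_mem _ (h4 i)))
    · rintro ⟨w, ⟨h1, h2, h3⟩, h4⟩
      refine ⟨w, ⟨h1, h2, fun i => ?_⟩, h4⟩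
      have h3i := h3 i
      split_ifs with hp
      · rw [if_pos hp] at h3i
        by_contra hcon
        push_neg at hcon
        exact hdisj (f (w i)) ⟨hcon, h3i.le⟩
          (Finset.mem_union_left _ (Finset.mem_image_of_mem f (h4 i)))
      · rw [if_neg hp] at h3i
        linarith
  show ((sSup (chainsIn f a b x (x+c) T) : ℕ) : ℝ) = ((sSup (chainsIn f a b y (y+c) T) : ℕ) : ℝ)
  rw [hset]

/-! ### Step functions are measurable -/

lemma isStepFunction_measurable {g : ℝ → ℝ} (h : IsStepFunction g) : Measurable g := by
  obtain ⟨s, hs⟩ := h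
  intro B _
  have hdecomp : g ⁻¹' B = ((g ⁻¹' B) ∩ ↑s) ∪ ((g ⁻¹' B) \ ↑s) := (inter_union_diff _ _).symm
  rw [hdecomp]
  refine MeasurableSet.union ((s.finite_toSet.subset inter_subset_right).measurableSet)
    (IsOpen.measurableSet ?_)
  rw [Metric.isOpen_iff]
  intro u hu
  obtain ⟨ε, hε, hball⟩ := Metric.isOpen_iff.mp (s.finite_toSet.isClosed.isOpen_compl) u hu.2
  refine ⟨ε, hε, ?_⟩
  intro v hv
  rw [Metric.mem_ball, Real.dist_eq, abs_sub_lt_iff] at hv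
  have hgv : g v = g u := by
    rcases le_total v u with hvu | huv
    · refine hs v u hvu fun t ht => hball ?_
      rw [Metric.mem_ball, Real.dist_eq, abs_sub_lt_iff]
      constructor
      · linarith [ht.2]
      · linarith [ht.1, hv.2]
    · refine (hs u v huv fun t ht => hball ?_).symm
      rw [Metric.mem_ball, Real.dist_eq, abs_sub_lt_iff]
      constructor
      · linarith [ht.2, hv.1]
      · linarith [ht.1]
  refine ⟨?_, hball (by rw [Metric.mem_ball, Real.dist_eq, abs_sub_lt_iff]; exact hv)⟩
  rw [mem_preimage, hgv]
  exact hu.1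

/-! ### `upcross` via alternating chains -/

lemma upcross_eq_sSup {f : ℝ → ℝ} {a b c : ℝ} (hab : a < b) (y : ℝ)
    (hbd : BddAbove {n | AltChain f a b y (y+c) n}) :
    upcross f a b c y = ((sSup {n | AltChain f a b y (y+c) n} : ℕ) : ℝ≥0∞) := by
  unfold upcross
  apply le_antisymm
  · refine iSup₂_le fun n hn => ?_
    have hn' : AltChain f a b y (y+c) n := (altChain_iff_K hab.le n).mpr hn
    exact Nat.cast_le.mpr (le_csSup hbd hn')
  · have hmem := Nat.sSup_mem (s := {n | AltChain f a b y (y+c) n})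
      ⟨0, altChain_zero f a b y (y+c)⟩ hbd
    have hK := (altChain_iff_K hab.le _).mp hmem
    exact le_iSup₂ (f := fun (n:ℕ)
      (_ : crossingTimes f b (fun r => r < y) (fun r => y + c < r) a (2*n) ≤ (b:EReal)) =>
      (n:ℝ≥0∞)) _ hK

/-! ### The core approximation result for `upcross` -/

lemma core {f : ℝ → ℝ} {a b c : ℝ} (hab : a < b) (hf : Regulated f a b) (hc : 0 < c) :
    ∃ g : ℕ → ℝ → ℝ, (∀ m, IsStepFunction (g m)) ∧
      ∀ y : ℝ, Tendsto (fun m => g m y) atTop (nhds ((upcross f a b c y).toReal)) := by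
  obtain ⟨e, he⟩ := (sampleSet_countable f a b).exists_eq_range
    ⟨b, Or.inl (Or.inr rfl)⟩
  obtain ⟨N, hN⟩ := exists_bound hf hc
  refine ⟨fun m y => ((sSup (chainsIn f a b y (y+c) ((Finset.range (m+1)).image e)) : ℕ) : ℝ),
    fun m => isStep_countIn f a b c _, fun y => ?_⟩
  have hbd : BddAbove {n | AltChain f a b y (y+c) n} := by
    refine ⟨N, fun n hn => ?_⟩
    obtain ⟨w, hw⟩ := hn
    exact hN y n w hw
  rw [upcross_eq_sSup hab y hbd, ENNReal.toReal_natCast]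
  obtain ⟨w, hw⟩ := Nat.sSup_mem (s := {n | AltChain f a b y (y+c) n})
    ⟨0, altChain_zero f a b y (y+c)⟩ hbd
  obtain ⟨M, hM⟩ := chain_replace hf he hw
  refine tendsto_const_nhds.congr' ?_
  filter_upwards [eventually_ge_atTop M] with m hm
  have h1 : sSup (chainsIn f a b y (y+c) ((Finset.range (m+1)).image e))
      = sSup {n | AltChain f a b y (y+c) n} := by
    apply le_antisymm
    · exact csSup_le_csSup hbd ⟨0, zero_mem_chainsIn f a b y (y+c) _⟩
        (chainsIn_subset f a b y (y+c) _)
    · obtain ⟨w', hw', hw'T⟩ := hM m hm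
      exact le_csSup (BddAbove.mono (chainsIn_subset f a b y (y+c) _) hbd) ⟨w', hw', hw'T⟩
  exact congrArg (fun k : ℕ => (k:ℝ)) h1.symm

/-! ### Transporting `downcross` to `upcross` of `-f` -/

lemma crossingTimes_neg (f : ℝ → ℝ) (a b c y : ℝ) : ∀ n,
    crossingTimes (fun t => -f t) b (fun r => r < -y - c) (fun r => -y - c + c < r) a n
      = crossingTimes f b (fun r => y + c < r) (fun r => r < y) a n := by
  intro n
  induction n with
  | zero => rfl
  | succ n ih =>
    show sInf _ = sInf _
    congr 1
    ext x
    simp only [mem_setOf_eq, ih]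
    constructor <;> rintro ⟨t, rfl, h1, h2, h3⟩ <;> refine ⟨t, rfl, h1, h2, ?_⟩ <;>
      (split_ifs at h3 ⊢ <;> linarith)

lemma downcross_eq (f : ℝ → ℝ) (a b c y : ℝ) :
    downcross f a b c y = upcross (fun t => -f t) a b c (-y - c) := by
  unfold upcross downcross
  refine iSup_congr fun n => ?_
  rw [crossingTimes_neg f a b c y (2*n)]

lemma regulated_neg {f : ℝ → ℝ} {a b : ℝ} (hf : Regulated f a b) :
    Regulated (fun t => -f t) a b :=
  ⟨fun t ht => let ⟨L, hL⟩ := hf.1 t ht; ⟨-L, hL.neg⟩,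
   fun t ht => let ⟨L, hL⟩ := hf.2 t ht; ⟨-L, hL.neg⟩⟩

lemma isStep_comp_affine {g : ℝ → ℝ} (h : IsStepFunction g) (c : ℝ) :
    IsStepFunction (fun y => g (-y - c)) := by
  obtain ⟨s, hs⟩ := h
  refine ⟨s.image (fun x => -x - c), ?_⟩
  intro x y hxy hdisj
  refine (hs (-y - c) (-x - c) (by linarith) ?_).symm
  intro t ht hts
  refine hdisj (-t - c) ⟨by linarith [ht.2], by linarith [ht.1]⟩ ?_
  exact Finset.mem_image.mpr ⟨t, hts, rfl⟩

end CrossingsAux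
end
/-- For a regulated `f : [a,b] → ℝ` and `c > 0`, the maps `y ↦ u_c^y(f,[a,b])` and
`y ↦ d_c^y(f,[a,b])` (as real-valued functions on `ℝ`) are pointwise limits of step
functions; in particular they are Borel measurable. -/
theorem crossings_pointwise_limit_of_step_functions (a b c : ℝ) (f : ℝ → ℝ) (hab : a < b)
    (hf : Regulated f a b) (hc : 0 < c) :
    (∃ g : ℕ → ℝ → ℝ, (∀ n, IsStepFunction (g n)) ∧
      ∀ y : ℝ, Filter.Tendsto (fun n => g n y) Filter.atTop
        (nhds ((upcross f a b c y).toReal))) ∧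
    (∃ g : ℕ → ℝ → ℝ, (∀ n, IsStepFunction (g n)) ∧
      ∀ y : ℝ, Filter.Tendsto (fun n => g n y) Filter.atTop
        (nhds ((downcross f a b c y).toReal))) ∧
    Measurable (fun y : ℝ => (upcross f a b c y).toReal) ∧
    Measurable (fun y : ℝ => (downcross f a b c y).toReal) := by
  obtain ⟨g₁, hs₁, hl₁⟩ := CrossingsAux.core hab hf hc
  obtain ⟨g₂, hs₂, hl₂⟩ := CrossingsAux.core hab (CrossingsAux.regulated_neg hf) hc
  have hdl : ∀ y : ℝ, Filter.Tendsto (fun m => g₂ m (-y - c)) Filter.atTop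
      (nhds ((downcross f a b c y).toReal)) := by
    intro y
    rw [CrossingsAux.downcross_eq f a b c y]
    exact hl₂ (-y - c)
  have hmup : Measurable (fun y : ℝ => (upcross f a b c y).toReal) :=
    measurable_of_tendsto_metrizable (fun m => CrossingsAux.isStepFunction_measurable (hs₁ m))
      (tendsto_pi_nhds.mpr hl₁)
  have hmdown : Measurable (fun y : ℝ => (downcross f a b c y).toReal) :=
    measurable_of_tendsto_metrizable
      (fun m => CrossingsAux.isStepFunction_measurable (CrossingsAux.isStep_comp_affine (hs₂ m) c))
      (tendsto_pi_nhds.mpr hdl)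
  exact ⟨⟨g₁, hs₁, hl₁⟩,
    ⟨fun m y => g₂ m (-y - c), fun m => CrossingsAux.isStep_comp_affine (hs₂ m) c, hdl⟩,
    hmup, hmdown⟩
end

section
/- Let f, g : [a,b] → ℝ, let c > 0 and let ε ∈ (0, c/2) satisfy sup_{t ∈ [a,b]} |f(t) − g(t)| ≤ ε. Then for every y ∈ ℝ, u_c^y(f,[a,b]) ≤ u_{c−2ε}^{y+ε}(g,[a,b]). -/
open MeasureTheory Filter Set
open scoped ENNReal NNReal

lemma crossingTimes_ge (f : ℝ → ℝ) (b : ℝ) (p q : ℝ → Prop) (a : ℝ) :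
    ∀ n, (a : EReal) ≤ crossingTimes f b p q a n := by
  intro n
  induction n with
  | zero => simp [crossingTimes]
  | succ n ih =>
    rw [crossingTimes]
    refine le_sInf ?_
    rintro x ⟨t, rfl, ht, -, -⟩
    exact le_of_lt (lt_of_le_of_lt ih ht)

/-- If `g` approximates `f` uniformly on `[a,b]` with accuracy `ε ∈ (0, c/2)`, then every
upcrossing by `f` of `[y, y+c]` yields an upcrossing by `g` of `[y+ε, y+ε+(c-2ε)]`:
`u_c^y(f,[a,b]) ≤ u_{c-2ε}^{y+ε}(g,[a,b])`. -/
theorem upcross_le_of_uniform_approx (a b c ε y : ℝ) (f g : ℝ → ℝ) (hab : a < b)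
    (hc : 0 < c) (hε : 0 < ε) (hεc : ε < c / 2)
    (happrox : ∀ t ∈ Set.Icc a b, |f t - g t| ≤ ε) :
    upcross f a b c y ≤ upcross g a b (c - 2 * ε) (y + ε) := by
  have key : ∀ n, crossingTimes g b (fun r => r < y + ε) (fun r => y + ε + (c - 2*ε) < r) a n
      ≤ crossingTimes f b (fun r => r < y) (fun r => y + c < r) a n := by
    intro n
    induction n with
    | zero => simp [crossingTimes]
    | succ n ih =>
      rw [crossingTimes, crossingTimes]
      apply sInf_le_sInf
      rintro x ⟨t, rfl, htf, htb, hcond⟩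
      have hat : a < t := by
        have := lt_of_le_of_lt (crossingTimes_ge f b _ _ a n) htf
        exact_mod_cast this
      have habs := happrox t ⟨le_of_lt hat, htb⟩
      rw [abs_sub_le_iff] at habs
      refine ⟨t, rfl, lt_of_le_of_lt ih htf, htb, ?_⟩
      split_ifs at hcond ⊢ with h
      · linarith [habs.2]
      · linarith [habs.1]
  rw [upcross, upcross]
  refine iSup_le fun n => iSup_le fun hn => ?_
  exact le_iSup₂ (f := fun (n : ℕ) (_ : crossingTimes g b (fun r => r < y + ε)
    (fun r => y + ε + (c - 2*ε) < r) a (2*n) ≤ (b:EReal)) => (n : ℝ≥0∞)) n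
    (le_trans (key (2*n)) hn)
end

section
/- Let f : [a,b] → ℝ be a regulated function and c > 0. Then for every y ∈ ℝ the number of crossings of the segment [y, y+c] is finite: n_c^y(f,[a,b]) < +∞. -/
open MeasureTheory Filter Set
open scoped ENNReal NNReal

section CrossAux

lemma crossingTimes_succ (f : ℝ → ℝ) (b : ℝ) (p q : ℝ → Prop) (a : ℝ) (n : ℕ) :
    crossingTimes f b p q a (n + 1) =
      sInf {x : EReal | ∃ t : ℝ, x = (t : EReal) ∧
        crossingTimes f b p q a n < (t : EReal) ∧ t ≤ b ∧
        (if n % 2 = 0 then p (f t) else q (f t))} := rfl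

lemma crossingTimes_mono (f : ℝ → ℝ) (b : ℝ) (p q : ℝ → Prop) (a : ℝ) :
    Monotone (crossingTimes f b p q a) := by
  apply monotone_nat_of_le_succ
  intro n
  rw [crossingTimes_succ]
  apply le_sInf
  rintro x ⟨t, rfl, ht, -, -⟩
  exact ht.le

lemma crossingTimes_step (f : ℝ → ℝ) (b : ℝ) (p q : ℝ → Prop) (a : ℝ) {n : ℕ} {ε : EReal}
    (hε : crossingTimes f b p q a (n + 1) < ε) :
    ∃ t : ℝ, crossingTimes f b p q a n < (t : EReal) ∧ t ≤ b ∧ (t : EReal) < ε ∧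
      (if n % 2 = 0 then p (f t) else q (f t)) := by
  rw [crossingTimes_succ] at hε
  obtain ⟨x, hx, hxε⟩ := sInf_lt_iff.mp hε
  obtain ⟨t, rfl, h1, h2, h3⟩ := hx
  exact ⟨t, h1, h2, hxε, h3⟩

lemma crossingTimes_gt_of_regulated {f : ℝ → ℝ} {a b c : ℝ} {p q : ℝ → Prop}
    (hab : a < b) (hf : Regulated f a b) (hc : 0 < c)
    (sep : ∀ r₁ r₂, p r₁ → q r₂ → c ≤ |r₁ - r₂|) :
    ∃ n, (b : EReal) < crossingTimes f b p q a n := by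
  by_contra hcon
  push_neg at hcon
  have hmono := crossingTimes_mono f b p q a
  have h0 : crossingTimes f b p q a 0 = (a : EReal) := rfl
  have hge : ∀ n, (a : EReal) ≤ crossingTimes f b p q a n := fun n => h0 ▸ hmono (Nat.zero_le n)
  obtain ⟨s, hsg⟩ : ∃ s : ℕ → ℝ, ∀ n, crossingTimes f b p q a n = (s n : EReal) := by
    refine ⟨fun n => (crossingTimes f b p q a n).toReal, fun n => ?_⟩
    refine (EReal.coe_toReal ?_ ?_).symm
    · exact ((hcon n).trans_lt (EReal.coe_lt_top b)).ne
    · exact ((EReal.bot_lt_coe a).trans_le (hge n)).ne'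
  have hsb : ∀ n, s n ≤ b := fun n => by
    have := hcon n; rw [hsg n] at this; exact_mod_cast this
  have hsmono : Monotone s := fun m n hmn => by
    have h := hmono hmn; rw [hsg m, hsg n] at h; exact_mod_cast h
  have hbdd : BddAbove (Set.range s) := ⟨b, by rintro x ⟨n, rfl⟩; exact hsb n⟩
  set T := ⨆ n, s n with hTdef
  have hsT : ∀ n, s n ≤ T := fun n => le_ciSup hbdd n
  have hs0 : s 0 = a := by
    have := hsg 0; rw [h0] at this
    exact_mod_cast this.symm
  -- a helper to get the contradiction from two close points where p and q hold
  have key : ∀ (L : ℝ) (t1 t2 : ℝ), p (f t1) → q (f t2) →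
      |f t1 - L| < c / 2 → |f t2 - L| < c / 2 → False := by
    intro L t1 t2 hp hq h1 h2
    have hsep := sep _ _ hp hq
    have habs : |f t1 - f t2| ≤ |f t1 - L| + |L - f t2| := abs_sub_le _ _ _
    rw [abs_sub_comm L (f t2)] at habs
    linarith
  by_cases hA : ∃ N, s N = T
  · -- the sequence is eventually constant equal to T; use the right limit at T
    obtain ⟨N, hN⟩ := hA
    have hgN : ∀ m, N ≤ m → crossingTimes f b p q a m = (T : EReal) := by
      intro m hm
      rw [hsg m]
      exact_mod_cast congrArg (fun r : ℝ => (r : EReal))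
        (le_antisymm (hsT m) (hN ▸ hsmono hm))
    have hTb : T < b := by
      obtain ⟨t, ht1, ht2, -, -⟩ := crossingTimes_step f b p q a (n := N) (ε := (⊤ : EReal))
        (by rw [hsg (N+1)]; exact EReal.coe_lt_top _)
      rw [hgN N le_rfl] at ht1
      have : T < t := by exact_mod_cast ht1
      exact this.trans_le ht2
    have hTa : a ≤ T := hs0 ▸ hsT 0
    obtain ⟨L, hL⟩ := hf.1 T ⟨hTa, hTb⟩
    have hball : {t : ℝ | |f t - L| < c / 2} ∈ nhdsWithin T (Set.Ioi T) := by
      have hmem : Set.Ioo (L - c/2) (L + c/2) ∈ nhds L :=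
        Ioo_mem_nhds (by linarith) (by linarith)
      have := hL hmem
      rw [Filter.mem_map] at this
      refine Filter.mem_of_superset this ?_
      intro t ht
      simp only [Set.mem_preimage, Set.mem_Ioo] at ht
      simp only [Set.mem_setOf_eq, abs_sub_lt_iff]
      constructor <;> linarith [ht.1, ht.2]
    obtain ⟨u, hu, huI⟩ := mem_nhdsGT_iff_exists_Ioo_subset.mp hball
    have hTu : T < u := hu
    obtain ⟨t1, ht1a, ht1b, ht1u, ht1P⟩ := crossingTimes_step f b p q a (n := N)
      (ε := (u : EReal)) (by rw [hgN (N+1) (Nat.le_succ N)]; exact_mod_cast hTu)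
    obtain ⟨t2, ht2a, ht2b, ht2u, ht2P⟩ := crossingTimes_step f b p q a (n := N + 1)
      (ε := (u : EReal)) (by rw [hgN (N+2) (by omega)]; exact_mod_cast hTu)
    rw [hgN N le_rfl] at ht1a
    rw [hgN (N+1) (Nat.le_succ N)] at ht2a
    have ht1T : T < t1 := by exact_mod_cast ht1a
    have ht2T : T < t2 := by exact_mod_cast ht2a
    have ht1u' : t1 < u := by exact_mod_cast ht1u
    have ht2u' : t2 < u := by exact_mod_cast ht2u
    have hm1 : |f t1 - L| < c / 2 := huI ⟨ht1T, ht1u'⟩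
    have hm2 : |f t2 - L| < c / 2 := huI ⟨ht2T, ht2u'⟩
    rcases Nat.even_or_odd N with hE | hO
    · have e1 : N % 2 = 0 := Nat.even_iff.mp hE
      have e2 : (N + 1) % 2 ≠ 0 := by omega
      rw [if_pos e1] at ht1P
      rw [if_neg e2] at ht2P
      exact key L t1 t2 ht1P ht2P hm1 hm2
    · have e1 : N % 2 ≠ 0 := by have := Nat.odd_iff.mp hO; omega
      have e2 : (N + 1) % 2 = 0 := by have := Nat.odd_iff.mp hO; omega
      rw [if_neg e1] at ht1P
      rw [if_pos e2] at ht2P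
      exact key L t2 t1 ht2P ht1P hm2 hm1
  · -- the sequence increases strictly towards T; use the left limit at T
    push_neg at hA
    have hlt : ∀ n, s n < T := fun n => lt_of_le_of_ne (hsT n) (hA n)
    have hTa : a < T := hs0 ▸ hlt 0
    have hTb : T ≤ b := ciSup_le hsb
    obtain ⟨L, hL⟩ := hf.2 T ⟨hTa, hTb⟩
    have hball : {t : ℝ | |f t - L| < c / 2} ∈ nhdsWithin T (Set.Iio T) := by
      have hmem : Set.Ioo (L - c/2) (L + c/2) ∈ nhds L :=
        Ioo_mem_nhds (by linarith) (by linarith)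
      have := hL hmem
      rw [Filter.mem_map] at this
      refine Filter.mem_of_superset this ?_
      intro t ht
      simp only [Set.mem_preimage, Set.mem_Ioo] at ht
      simp only [Set.mem_setOf_eq, abs_sub_lt_iff]
      constructor <;> linarith [ht.1, ht.2]
    obtain ⟨u, hu, huI⟩ := mem_nhdsLT_iff_exists_Ioo_subset.mp hball
    have huT : u < T := hu
    obtain ⟨N, hN⟩ := (lt_ciSup_iff hbdd).mp huT
    obtain ⟨t1, ht1a, ht1b, ht1u, ht1P⟩ := crossingTimes_step f b p q a (n := N)
      (ε := (T : EReal)) (by rw [hsg (N+1)]; exact_mod_cast hlt (N+1))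
    obtain ⟨t2, ht2a, ht2b, ht2u, ht2P⟩ := crossingTimes_step f b p q a (n := N + 1)
      (ε := (T : EReal)) (by rw [hsg (N+2)]; exact_mod_cast hlt (N+2))
    rw [hsg N] at ht1a
    rw [hsg (N+1)] at ht2a
    have ht1s : s N < t1 := by exact_mod_cast ht1a
    have ht2s : s (N+1) < t2 := by exact_mod_cast ht2a
    have ht1T : t1 < T := by exact_mod_cast ht1u
    have ht2T : t2 < T := by exact_mod_cast ht2u
    have hm1 : |f t1 - L| < c / 2 := huI ⟨hN.trans ht1s, ht1T⟩
    have hm2 : |f t2 - L| < c / 2 := huI ⟨hN.trans (lt_of_le_of_lt (hsmono (Nat.le_succ N)) ht2s), ht2T⟩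
    rcases Nat.even_or_odd N with hE | hO
    · have e1 : N % 2 = 0 := Nat.even_iff.mp hE
      have e2 : (N + 1) % 2 ≠ 0 := by omega
      rw [if_pos e1] at ht1P
      rw [if_neg e2] at ht2P
      exact key L t1 t2 ht1P ht2P hm1 hm2
    · have e1 : N % 2 ≠ 0 := by have := Nat.odd_iff.mp hO; omega
      have e2 : (N + 1) % 2 = 0 := by have := Nat.odd_iff.mp hO; omega
      rw [if_neg e1] at ht1P
      rw [if_pos e2] at ht2P
      exact key L t2 t1 ht2P ht1P hm2 hm1

end CrossAux

/-- For a regulated `f : [a,b] → ℝ` and `c > 0`, the number of crossings of the segment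
`[y, y+c]` is finite for every `y ∈ ℝ`. -/
theorem crossings_finite (a b c : ℝ) (f : ℝ → ℝ) (hab : a < b)
    (hf : Regulated f a b) (hc : 0 < c) :
    ∀ y : ℝ, downcross f a b c y + upcross f a b c y < ⊤ := by
  intro y
  obtain ⟨N₁, hN₁⟩ := crossingTimes_gt_of_regulated (p := fun r => y + c < r)
    (q := fun r => r < y) hab hf hc
    (fun r₁ r₂ h1 h2 => le_abs.mpr (Or.inl (by linarith)))
  obtain ⟨N₂, hN₂⟩ := crossingTimes_gt_of_regulated (p := fun r => r < y)
    (q := fun r => y + c < r) hab hf hc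
    (fun r₁ r₂ h1 h2 => le_abs.mpr (Or.inr (by simp; linarith)))
  have hd : downcross f a b c y ≤ (N₁ : ℝ≥0∞) := by
    rw [downcross]
    refine iSup₂_le fun n hn => ?_
    have : ¬ (N₁ ≤ 2 * n) := fun h =>
      absurd (le_trans (crossingTimes_mono f b _ _ a h) hn) (not_le.mpr hN₁)
    exact_mod_cast Nat.cast_le.mpr (by omega : n ≤ N₁)
  have hu : upcross f a b c y ≤ (N₂ : ℝ≥0∞) := by
    rw [upcross]
    refine iSup₂_le fun n hn => ?_
    have : ¬ (N₂ ≤ 2 * n) := fun h =>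
      absurd (le_trans (crossingTimes_mono f b _ _ a h) hn) (not_le.mpr hN₂)
    exact_mod_cast Nat.cast_le.mpr (by omega : n ≤ N₂)
  exact ENNReal.add_lt_top.mpr
    ⟨hd.trans_lt (ENNReal.natCast_lt_top N₁), hu.trans_lt (ENNReal.natCast_lt_top N₂)⟩
end

section
/- A function f : [a,b] → ℝ is regulated if and only if its truncated variation is finite at every positive truncation level: f is regulated ⇔ TTV^c(f,[a,b]) < +∞ for every c > 0. -/
set_option maxRecDepth 8000


open MeasureTheory Filter Set
open scoped ENNReal NNReal

theorem dep_choice {α : Type*} (P : α → Prop) (R : α → α → Prop)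
    (h0 : ∃ x, P x) (hstep : ∀ x, P x → ∃ y, P y ∧ R x y) :
    ∃ g : ℕ → α, (∀ k, P (g k)) ∧ ∀ k, R (g k) (g (k + 1)) := by
  classical
  let G : ℕ → {x // P x} := fun n =>
    Nat.rec ⟨h0.choose, h0.choose_spec⟩
      (fun _ ih => ⟨(hstep ih.1 ih.2).choose, (hstep ih.1 ih.2).choose_spec.1⟩) n
  refine ⟨fun n => (G n).1, fun k => (G k).2, fun k => ?_⟩
  exact (hstep (G k).1 (G k).2).choose_spec.2

theorem sum_le_TTV (f : ℝ → ℝ) (a b c : ℝ) (n : ℕ) (t : Fin (n + 1) → ℝ)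
    (ht : StrictMono t) (hmem : ∀ i, t i ∈ Set.Icc a b) :
    ∑ i : Fin n, ENNReal.ofReal (|f (t i.succ) - f (t i.castSucc)| - c) ≤ TTV f a b c := by
  refine le_iSup_of_le n ?_
  refine le_iSup_of_le t ?_
  rw [iSup_pos ht, iSup_pos hmem]

theorem ttv_top_of_pairs (f : ℝ → ℝ) (a b c ε : ℝ) (hc : 0 < c) (hcε : c < ε)
    (h : ∀ n : ℕ, ∃ x : Fin (2 * n + 2) → ℝ, StrictMono x ∧ (∀ i, x i ∈ Set.Icc a b) ∧
      ∀ k : Fin (n + 1),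
        ε ≤ |f (x ⟨2 * k.val + 1, by omega⟩) - f (x ⟨2 * k.val, by omega⟩)|) :
    TTV f a b c = ⊤ := by
  have key : ∀ n : ℕ, ((n : ℝ≥0∞) + 1) * ENNReal.ofReal (ε - c) ≤ TTV f a b c := by
    intro n
    obtain ⟨x, hx, hmem, hpair⟩ := h n
    set m : ℕ := 2 * n + 1 with hm
    have hcast : m + 1 = 2 * n + 2 := by omega
    set t : Fin (m + 1) → ℝ := fun i => x (Fin.cast hcast i) with htdef
    have ht : StrictMono t := fun i j hij => hx (by rw [Fin.lt_def] at hij ⊢; exact hij)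
    have htmem : ∀ i, t i ∈ Set.Icc a b := fun i => hmem _
    have hsum := sum_le_TTV f a b c m t ht htmem
    refine le_trans ?_ hsum
    set F : Fin m → ℝ≥0∞ :=
      fun i => ENNReal.ofReal (|f (t i.succ) - f (t i.castSucc)| - c) with hF
    have einj : Function.Injective (fun k : Fin (n + 1) => (⟨2 * k.val, by omega⟩ : Fin m)) := by
      intro k k' hkk'
      have : 2 * k.val = 2 * k'.val := congrArg Fin.val hkk'
      exact Fin.ext (by omega)
    have h1 : ∑ k : Fin (n + 1), F ⟨2 * k.val, by omega⟩ ≤ ∑ i : Fin m, F i := by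
      have := Finset.sum_map Finset.univ ⟨fun k : Fin (n+1) => (⟨2 * k.val, by omega⟩ : Fin m), einj⟩ F
      simp only [Function.Embedding.coeFn_mk] at this
      rw [← this]
      exact Finset.sum_le_sum_of_subset (Finset.subset_univ _)
    refine le_trans ?_ h1
    have h2 : ∀ k : Fin (n + 1), ENNReal.ofReal (ε - c) ≤ F ⟨2 * k.val, by omega⟩ := by
      intro k
      have e1 : t (⟨2 * k.val, by omega⟩ : Fin m).succ = x ⟨2 * k.val + 1, by omega⟩ := by
        apply congrArg x; exact Fin.ext rfl
      have e2 : t (Fin.castSucc ⟨2 * k.val, by omega⟩) = x ⟨2 * k.val, by omega⟩ := by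
        apply congrArg x; exact Fin.ext rfl
      rw [hF]; dsimp only; rw [e1, e2]
      exact ENNReal.ofReal_le_ofReal (by linarith [hpair k])
    calc ((n : ℝ≥0∞) + 1) * ENNReal.ofReal (ε - c)
        = ∑ _k : Fin (n + 1), ENNReal.ofReal (ε - c) := by
          simp [Finset.sum_const, mul_comm]
      _ ≤ ∑ k : Fin (n + 1), F ⟨2 * k.val, by omega⟩ := Finset.sum_le_sum fun k _ => h2 k
  by_contra hne
  have hlt : TTV f a b c < ⊤ := lt_top_iff_ne_top.mpr hne
  have hd : (0:ℝ) < ε - c := by linarith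
  obtain ⟨n, hn⟩ := exists_nat_gt ((TTV f a b c).toReal / (ε - c))
  have := key n
  have hfin : ((n : ℝ≥0∞) + 1) * ENNReal.ofReal (ε - c) ≠ ⊤ := by
    exact ENNReal.mul_ne_top (by simp) ENNReal.ofReal_ne_top
  have htr := ENNReal.toReal_mono hne this
  rw [ENNReal.toReal_mul, ENNReal.toReal_ofReal hd.le] at htr
  have he : ((n : ℝ≥0∞) + 1).toReal = (n : ℝ) + 1 := by
    rw [ENNReal.toReal_add (by simp) (by simp)]; simp
  rw [he] at htr
  have hdiv : (TTV f a b c).toReal / (ε - c) ≥ (n : ℝ) + 1 := by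
    rw [ge_iff_le, le_div_iff₀ hd]; linarith
  linarith

theorem ttv_top_of_seq (f : ℝ → ℝ) (a b c ε : ℝ) (hc : 0 < c) (hcε : c < ε)
    (h : ∀ n : ℕ, ∃ g : ℕ → ℝ × ℝ,
      (∀ k ≤ n, (g k).1 ∈ Set.Icc a b ∧ (g k).2 ∈ Set.Icc a b ∧ (g k).1 < (g k).2 ∧
        ε ≤ |f (g k).2 - f (g k).1|) ∧ ∀ k < n, (g k).2 < (g (k + 1)).1) :
    TTV f a b c = ⊤ := by
  refine ttv_top_of_pairs f a b c ε hc hcε (fun n => ?_)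
  obtain ⟨g, hg, hsep⟩ := h n
  refine ⟨fun i => if i.val % 2 = 0 then (g (i.val / 2)).1 else (g (i.val / 2)).2, ?_, ?_, ?_⟩
  · rw [Fin.strictMono_iff_lt_succ]
    intro i
    have hv : i.val ≤ 2 * n := by omega
    have hsv : (i.succ : Fin (2 * n + 2)).val = i.val + 1 := rfl
    have hcv : (i.castSucc : Fin (2 * n + 2)).val = i.val := rfl
    simp only [hsv, hcv]
    rcases Nat.mod_two_eq_zero_or_one i.val with he | ho
    · have h1 : (i.val + 1) % 2 = 1 := by omega
      have h2 : (i.val + 1) / 2 = i.val / 2 := by omega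
      simp only [he, h1, h2, if_true, if_pos rfl]
      rw [if_neg (by omega)]
      exact (hg (i.val / 2) (by omega)).2.2.1
    · have h1 : (i.val + 1) % 2 = 0 := by omega
      have h2 : (i.val + 1) / 2 = i.val / 2 + 1 := by omega
      rw [if_neg (by omega), if_pos (by omega), h2]
      exact hsep (i.val / 2) (by omega)
  · intro i
    dsimp only
    rcases Nat.mod_two_eq_zero_or_one i.val with he | ho
    · rw [if_pos he]; exact (hg (i.val / 2) (by omega)).1
    · rw [if_neg (by omega)]; exact (hg (i.val / 2) (by omega)).2.1
  · intro k
    have h1 : (2 * k.val + 1) % 2 = 1 := by omega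
    have h2 : (2 * k.val + 1) / 2 = k.val := by omega
    have h3 : (2 * k.val) % 2 = 0 := by omega
    have h4 : (2 * k.val) / 2 = k.val := by omega
    simp only
    rw [if_neg (by omega), if_pos h3, h2, h4]
    exact (hg k.val (by omega)).2.2.2

/-- If truncated variation is finite at every level, `f` is "Cauchy" near any point
from the appropriate side; we derive limits by completeness. -/
theorem regulated_of_ttv_finite (a b : ℝ) (f : ℝ → ℝ) (hab : a < b)
    (h : ∀ c : ℝ, 0 < c → TTV f a b c < ⊤) :
    (∀ t ∈ Set.Ico a b, ∃ L : ℝ, Tendsto f (nhdsWithin t (Set.Ioi t)) (nhds L)) ∧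
    (∀ t ∈ Set.Ioc a b, ∃ L : ℝ, Tendsto f (nhdsWithin t (Set.Iio t)) (nhds L)) := by
  constructor
  · intro t ht
    have hC : Cauchy (Filter.map f (nhdsWithin t (Set.Ioi t))) := by
      by_contra hnc
      rw [Metric.cauchy_iff] at hnc
      push_neg at hnc
      obtain ⟨ε, hε, hbad⟩ := hnc Filter.map_neBot
      · have crit : ∀ d : ℝ, t < d → ∃ u v : ℝ, u ∈ Set.Ioo t d ∧ v ∈ Set.Ioo t d ∧
            u < v ∧ ε ≤ |f v - f u| := by
          intro d hd
          have hmem : f '' Set.Ioo t d ∈ Filter.map f (nhdsWithin t (Set.Ioi t)) := by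
            rw [Filter.mem_map]
            exact Filter.mem_of_superset (Ioo_mem_nhdsGT_of_mem ⟨le_refl t, hd⟩)
              (Set.subset_preimage_image f _)
          obtain ⟨x, hx, y, hy, hxy⟩ := hbad _ hmem
          obtain ⟨u, hu, hux⟩ := hx
          obtain ⟨v, hv, hvy⟩ := hy
          rcases lt_trichotomy u v with huv | huv | huv
          · refine ⟨u, v, hu, hv, huv, ?_⟩
            rw [← hux, ← hvy] at hxy
            rwa [Real.dist_eq, abs_sub_comm] at hxy
          · exfalso
            rw [← hux, ← hvy, huv] at hxy
            simp at hxy; linarith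
          · refine ⟨v, u, hv, hu, huv, ?_⟩
            rw [← hux, ← hvy] at hxy
            rwa [Real.dist_eq] at hxy
        obtain ⟨g, hP, hR⟩ := dep_choice
          (fun p : ℝ × ℝ => t < p.1 ∧ p.1 < p.2 ∧ p.2 < b ∧ ε ≤ |f p.2 - f p.1|)
          (fun p q => q.2 < p.1)
          (by
            obtain ⟨u, v, hu, hv, huv, hfe⟩ := crit b ht.2
            exact ⟨(u, v), hu.1, huv, hv.2, hfe⟩)
          (by
            rintro p ⟨hp1, hp2, hp3, _⟩
            obtain ⟨u, v, hu, hv, huv, hfe⟩ := crit p.1 hp1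
            exact ⟨(u, v), ⟨hu.1, huv, lt_trans hv.2 (lt_trans hp2 hp3), hfe⟩, hv.2⟩)
        have htop : TTV f a b (ε / 2) = ⊤ := by
          refine ttv_top_of_seq f a b (ε / 2) ε (by linarith) (by linarith) (fun n => ?_)
          refine ⟨fun k => g (n - k), fun k _hk => ?_, fun k hk => ?_⟩
          · obtain ⟨h1, h2, h3, h4⟩ := hP (n - k)
            have hta : a ≤ t := ht.1
            exact ⟨⟨by linarith, by linarith⟩, ⟨by linarith, by linarith⟩, h2, h4⟩
          · have he : n - k = (n - k - 1) + 1 := by omega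
            have := hR (n - k - 1)
            rw [← he] at this
            -- this : (g (n - k)).2 < (g (n - k - 1)).1
            have he2 : n - (k + 1) = n - k - 1 := by omega
            show (g (n - k)).2 < (g (n - (k + 1))).1
            rw [he2]
            exact this
        exact absurd (h (ε / 2) (by linarith)) (by rw [htop]; simp)
    obtain ⟨L, hL⟩ := CompleteSpace.complete hC
    exact ⟨L, hL⟩
  · intro t ht
    have hC : Cauchy (Filter.map f (nhdsWithin t (Set.Iio t))) := by
      by_contra hnc
      rw [Metric.cauchy_iff] at hnc
      push_neg at hnc
      obtain ⟨ε, hε, hbad⟩ := hnc Filter.map_neBot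
      · have crit : ∀ d : ℝ, d < t → ∃ u v : ℝ, u ∈ Set.Ioo d t ∧ v ∈ Set.Ioo d t ∧
            u < v ∧ ε ≤ |f v - f u| := by
          intro d hd
          have hmem : f '' Set.Ioo d t ∈ Filter.map f (nhdsWithin t (Set.Iio t)) := by
            rw [Filter.mem_map]
            exact Filter.mem_of_superset (Ioo_mem_nhdsLT_of_mem ⟨hd, le_refl t⟩)
              (Set.subset_preimage_image f _)
          obtain ⟨x, hx, y, hy, hxy⟩ := hbad _ hmem
          obtain ⟨u, hu, hux⟩ := hx
          obtain ⟨v, hv, hvy⟩ := hy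
          rcases lt_trichotomy u v with huv | huv | huv
          · refine ⟨u, v, hu, hv, huv, ?_⟩
            rw [← hux, ← hvy] at hxy
            rwa [Real.dist_eq, abs_sub_comm] at hxy
          · exfalso
            rw [← hux, ← hvy, huv] at hxy
            simp at hxy; linarith
          · refine ⟨v, u, hv, hu, huv, ?_⟩
            rw [← hux, ← hvy] at hxy
            rwa [Real.dist_eq] at hxy
        obtain ⟨g, hP, hR⟩ := dep_choice
          (fun p : ℝ × ℝ => a < p.1 ∧ p.1 < p.2 ∧ p.2 < t ∧ ε ≤ |f p.2 - f p.1|)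
          (fun p q => p.2 < q.1)
          (by
            obtain ⟨u, v, hu, hv, huv, hfe⟩ := crit a ht.1
            exact ⟨(u, v), hu.1, huv, hv.2, hfe⟩)
          (by
            rintro p ⟨hp1, hp2, hp3, _⟩
            obtain ⟨u, v, hu, hv, huv, hfe⟩ := crit p.2 hp3
            exact ⟨(u, v), ⟨lt_trans (lt_trans hp1 hp2) hu.1, huv, hv.2, hfe⟩, hu.1⟩)
        have htop : TTV f a b (ε / 2) = ⊤ := by
          refine ttv_top_of_seq f a b (ε / 2) ε (by linarith) (by linarith) (fun n => ?_)
          refine ⟨g, fun k _hk => ?_, fun k _hk => hR k⟩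
          obtain ⟨h1, h2, h3, h4⟩ := hP k
          have htb : t ≤ b := ht.2
          exact ⟨⟨by linarith, by linarith⟩, ⟨by linarith, by linarith⟩, h2, h4⟩
        exact absurd (h (ε / 2) (by linarith)) (by rw [htop]; simp)
    obtain ⟨L, hL⟩ := CompleteSpace.complete hC
    exact ⟨L, hL⟩

theorem exists_osc_partition (f : ℝ → ℝ) (a b c : ℝ) (hab : a < b) (hc : 0 < c)
    (hreg : Regulated f a b) :
    ∃ (m : ℕ) (s : Fin (m + 1) → ℝ), StrictMono s ∧ s 0 = a ∧ s (Fin.last m) = b ∧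
      ∀ i : Fin m, ∀ u ∈ Set.Ioo (s i.castSucc) (s i.succ),
        ∀ v ∈ Set.Ioo (s i.castSucc) (s i.succ), |f u - f v| ≤ c := by
  set Q : ℝ → Prop := fun x => ∃ (m : ℕ) (s : Fin (m + 1) → ℝ), StrictMono s ∧ s 0 = a ∧
      s (Fin.last m) = x ∧
      ∀ i : Fin m, ∀ u ∈ Set.Ioo (s i.castSucc) (s i.succ),
        ∀ v ∈ Set.Ioo (s i.castSucc) (s i.succ), |f u - f v| ≤ c with hQ
  have hQa : Q a := by
    refine ⟨0, fun _ => a, ?_, rfl, rfl, fun i => i.elim0⟩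
    intro i j hij
    rw [Fin.lt_def] at hij
    omega
  have hext : ∀ x y : ℝ, Q x → x < y →
      (∀ u ∈ Set.Ioo x y, ∀ v ∈ Set.Ioo x y, |f u - f v| ≤ c) → Q y := by
    rintro x y ⟨m, s, hs, h0, hl, hosc⟩ hxy hoscxy
    refine ⟨m + 1, Fin.snoc s y, ?_, ?_, ?_, ?_⟩
    · rw [Fin.strictMono_iff_lt_succ]
      intro i
      induction i using Fin.lastCases with
      | last =>
        rw [Fin.succ_last, Fin.snoc_last, Fin.snoc_castSucc, hl]
        exact hxy
      | cast j =>
        rw [Fin.succ_castSucc, Fin.snoc_castSucc, Fin.snoc_castSucc]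
        exact hs (Fin.castSucc_lt_succ (i := j))
    · rw [show (0 : Fin (m + 2)) = Fin.castSucc 0 from rfl, Fin.snoc_castSucc]
      exact h0
    · rw [Fin.snoc_last]
    · intro i
      induction i using Fin.lastCases with
      | last =>
        rw [Fin.succ_last, Fin.snoc_last, Fin.snoc_castSucc, hl]
        exact hoscxy
      | cast j =>
        rw [Fin.succ_castSucc, Fin.snoc_castSucc, Fin.snoc_castSucc]
        exact hosc j
  set A : Set ℝ := {x | x ∈ Set.Icc a b ∧ Q x} with hA
  have hAne : A.Nonempty := ⟨a, ⟨le_refl a, hab.le⟩, hQa⟩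
  have hAbdd : BddAbove A := ⟨b, fun x hx => hx.1.2⟩
  set S : ℝ := sSup A with hS
  have haS : a ≤ S := le_csSup hAbdd ⟨⟨le_refl a, hab.le⟩, hQa⟩
  have hSb : S ≤ b := csSup_le hAne fun x hx => hx.1.2
  have hQS : Q S := by
    rcases eq_or_lt_of_le haS with heq | hlt
    · rw [← heq]; exact hQa
    · obtain ⟨L, hL⟩ := hreg.2 S ⟨hlt, hSb⟩
      rw [Metric.tendsto_nhdsWithin_nhds] at hL
      obtain ⟨δ, hδ, hL'⟩ := hL (c / 2) (by linarith)
      obtain ⟨x, hxA, hxgt⟩ := exists_lt_of_lt_csSup hAne (show S - δ < S by linarith)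
      have hxle : x ≤ S := le_csSup hAbdd hxA
      rcases eq_or_lt_of_le hxle with heq2 | hlt2
      · rw [← heq2]; exact hxA.2
      · refine hext x S hxA.2 hlt2 ?_
        intro u hu v hv
        have hdu : dist u S < δ := by
          rw [Real.dist_eq, abs_of_nonpos (by linarith [hu.2] : u - S ≤ 0)]
          linarith [hu.1]
        have hdv : dist v S < δ := by
          rw [Real.dist_eq, abs_of_nonpos (by linarith [hv.2] : v - S ≤ 0)]
          linarith [hv.1]
        have hu' : dist (f u) L < c / 2 := hL' hu.2 hdu
        have hv' : dist (f v) L < c / 2 := hL' hv.2 hdv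
        rw [Real.dist_eq] at hu' hv'
        have h3 := abs_sub_le (f u) L (f v)
        rw [abs_sub_comm L (f v)] at h3
        linarith
  have hSeqb : S = b := by
    by_contra hne
    have hSltb : S < b := lt_of_le_of_ne hSb hne
    obtain ⟨L, hL⟩ := hreg.1 S ⟨haS, hSltb⟩
    rw [Metric.tendsto_nhdsWithin_nhds] at hL
    obtain ⟨δ, hδ, hL'⟩ := hL (c / 2) (by linarith)
    set y : ℝ := min b (S + δ / 2) with hy
    have hSy : S < y := lt_min hSltb (by linarith)
    have hyb : y ≤ b := min_le_left _ _
    have hyS : y ≤ S + δ / 2 := min_le_right _ _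
    have hQy : Q y := by
      refine hext S y hQS hSy ?_
      intro u hu v hv
      have hdu : dist u S < δ := by
        rw [Real.dist_eq, abs_of_nonneg (by linarith [hu.1] : (0:ℝ) ≤ u - S)]
        have := hu.2
        linarith
      have hdv : dist v S < δ := by
        rw [Real.dist_eq, abs_of_nonneg (by linarith [hv.1] : (0:ℝ) ≤ v - S)]
        have := hv.2
        linarith
      have hu' : dist (f u) L < c / 2 := hL' hu.1 hdu
      have hv' : dist (f v) L < c / 2 := hL' hv.1 hdv
      rw [Real.dist_eq] at hu' hv'
      have h3 := abs_sub_le (f u) L (f v)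
      rw [abs_sub_comm L (f v)] at h3
      linarith
    have hyA : y ∈ A := ⟨⟨le_trans haS hSy.le, hyb⟩, hQy⟩
    have := le_csSup hAbdd hyA
    linarith
  rw [hSeqb] at hQS
  exact hQS

theorem classify_mem (a b : ℝ) (m : ℕ) (s : Fin (m + 1) → ℝ) (hs : StrictMono s)
    (h0 : s 0 = a) (hl : s (Fin.last m) = b) (u : ℝ) (hu : u ∈ Set.Icc a b) :
    (∃ j, s j = u) ∨ ∃ i : Fin m, u ∈ Set.Ioo (s i.castSucc) (s i.succ) := by
  classical
  set T : Finset (Fin (m + 1)) := Finset.univ.filter (fun j => s j ≤ u) with hT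
  have h0T : (0 : Fin (m + 1)) ∈ T := by
    simp only [hT, Finset.mem_filter, Finset.mem_univ, true_and]
    rw [h0]; exact hu.1
  have hTne : T.Nonempty := ⟨0, h0T⟩
  set j0 : Fin (m + 1) := T.max' hTne with hj0
  have hj0T : j0 ∈ T := T.max'_mem hTne
  have hj0le : s j0 ≤ u := by
    have := hj0T
    simp only [hT, Finset.mem_filter] at this
    exact this.2
  rcases eq_or_lt_of_le hj0le with heq | hlt
  · exact Or.inl ⟨j0, heq⟩
  · have hj0ne : j0 ≠ Fin.last m := by
      intro hcon
      rw [hcon, hl] at hlt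
      exact absurd hu.2 (not_le.mpr hlt)
    have hj0lt : j0.val < m := by
      rcases lt_or_eq_of_le (Nat.lt_succ_iff.mp j0.isLt) with h | h
      · exact h
      · exact absurd (Fin.ext h) hj0ne
    set i : Fin m := ⟨j0.val, hj0lt⟩ with hi
    have hcs : i.castSucc = j0 := Fin.ext rfl
    refine Or.inr ⟨i, ?_, ?_⟩
    · rw [hcs]; exact hlt
    · by_contra hcon
      push_neg at hcon
      have hmemT : i.succ ∈ T := by
        simp only [hT, Finset.mem_filter, Finset.mem_univ, true_and]
        exact hcon
      have := T.le_max' i.succ hmemT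
      rw [← hj0, ← hcs] at this
      exact absurd this (not_le.mpr (Fin.castSucc_lt_succ (i := i)))

theorem exists_bound (f : ℝ → ℝ) (a b c : ℝ) (hc : 0 < c) (m : ℕ) (s : Fin (m + 1) → ℝ)
    (hs : StrictMono s) (h0 : s 0 = a) (hl : s (Fin.last m) = b)
    (hosc : ∀ i : Fin m, ∀ u ∈ Set.Ioo (s i.castSucc) (s i.succ),
        ∀ v ∈ Set.Ioo (s i.castSucc) (s i.succ), |f u - f v| ≤ c) :
    ∃ K : ℝ, 0 ≤ K ∧ ∀ u ∈ Set.Icc a b, |f u| ≤ K := by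
  set K : ℝ := (∑ j : Fin (m + 1), |f (s j)|) +
      (∑ i : Fin m, (|f ((s i.castSucc + s i.succ) / 2)| + c)) with hKdef
  have hterm1 : ∀ j : Fin (m + 1), |f (s j)| ≤ K := by
    intro j
    have h1 : |f (s j)| ≤ ∑ j : Fin (m + 1), |f (s j)| :=
      Finset.single_le_sum (f := fun j : Fin (m + 1) => |f (s j)|)
        (fun k _ => abs_nonneg _) (Finset.mem_univ j)
    have h2 : (0:ℝ) ≤ ∑ i : Fin m, (|f ((s i.castSucc + s i.succ) / 2)| + c) :=
      Finset.sum_nonneg fun i _ => by positivity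
    rw [hKdef]
    linarith
  have hterm2 : ∀ i : Fin m, |f ((s i.castSucc + s i.succ) / 2)| + c ≤ K := by
    intro i
    have h1 : |f ((s i.castSucc + s i.succ) / 2)| + c ≤
        ∑ i : Fin m, (|f ((s i.castSucc + s i.succ) / 2)| + c) :=
      Finset.single_le_sum (f := fun i : Fin m => |f ((s i.castSucc + s i.succ) / 2)| + c)
        (fun k _ => by positivity) (Finset.mem_univ i)
    have h2 : (0:ℝ) ≤ ∑ j : Fin (m + 1), |f (s j)| :=
      Finset.sum_nonneg fun j _ => abs_nonneg _
    rw [hKdef]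
    linarith
  refine ⟨K, le_trans (abs_nonneg _) (hterm1 0), ?_⟩
  intro u hu
  rcases classify_mem a b m s hs h0 hl u hu with ⟨j, hj⟩ | ⟨i, hi⟩
  · rw [← hj]; exact hterm1 j
  · set w : ℝ := (s i.castSucc + s i.succ) / 2 with hw
    have hmid : w ∈ Set.Ioo (s i.castSucc) (s i.succ) := by
      have := hs (Fin.castSucc_lt_succ (i := i))
      constructor
      · rw [hw]; linarith
      · rw [hw]; linarith
    have hd := hosc i u hi w hmid
    have h3 := abs_sub_abs_le_abs_sub (f u) (f w)
    have h2 := hterm2 i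
    rw [← hw] at h2
    linarith

theorem ttv_lt_top_of_osc (f : ℝ → ℝ) (a b c : ℝ) (hc : 0 < c) (m : ℕ)
    (s : Fin (m + 1) → ℝ) (hs : StrictMono s) (h0 : s 0 = a) (hl : s (Fin.last m) = b)
    (hosc : ∀ i : Fin m, ∀ u ∈ Set.Ioo (s i.castSucc) (s i.succ),
        ∀ v ∈ Set.Ioo (s i.castSucc) (s i.succ), |f u - f v| ≤ c)
    (K : ℝ) (hK : ∀ u ∈ Set.Icc a b, |f u| ≤ K) :
    TTV f a b c < ⊤ := by
  classical
  have hbound : TTV f a b c ≤ ((2 * (m + 1) : ℕ) : ℝ≥0∞) * ENNReal.ofReal (2 * K) := by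
    rw [TTV]
    refine iSup_le fun n => iSup_le fun t => iSup_le fun ht => iSup_le fun hmem => ?_
    set good : Fin n → Prop := fun i => ∃ j : Fin (m + 1), t i.castSucc ≤ s j ∧ s j ≤ t i.succ
      with hgood
    have hterm : ∀ i : Fin n, ENNReal.ofReal (|f (t i.succ) - f (t i.castSucc)| - c) ≤
        (if good i then ENNReal.ofReal (2 * K) else 0) := by
      intro i
      by_cases hg : good i
      · rw [if_pos hg]
        apply ENNReal.ofReal_le_ofReal
        have h1 := hK _ (hmem i.succ)
        have h2 := hK _ (hmem i.castSucc)
        have h3 : |f (t i.succ) - f (t i.castSucc)| ≤ |f (t i.succ)| + |f (t i.castSucc)| := by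
          have := abs_add_le (f (t i.succ)) (-(f (t i.castSucc)))
          simpa [sub_eq_add_neg, abs_neg] using this
        linarith
      · rw [if_neg hg]
        have hcs_lt : t i.castSucc < t i.succ := ht (Fin.castSucc_lt_succ (i := i))
        have hsmall : |f (t i.succ) - f (t i.castSucc)| ≤ c := by
          rcases classify_mem a b m s hs h0 hl (t i.castSucc) (hmem _) with ⟨j, hj⟩ | ⟨iv, hiv⟩
          · exact absurd ⟨j, le_of_eq hj.symm, hj ▸ hcs_lt.le⟩ hg
          · by_cases hcase : s iv.succ ≤ t i.succ
            · exact absurd ⟨iv.succ, hiv.2.le, hcase⟩ hg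
            · push_neg at hcase
              exact hosc iv _ ⟨lt_trans hiv.1 hcs_lt, hcase⟩ _ hiv
        simp [ENNReal.ofReal_eq_zero.mpr (by linarith : |f (t i.succ) - f (t i.castSucc)| - c ≤ 0)]
    have hcard : (Finset.univ.filter good).card ≤ 2 * (m + 1) := by
      set φ : Fin n → Fin (m + 1) × Bool := fun i =>
        if hg : good i then (hg.choose, decide (s hg.choose = t i.castSucc))
        else (0, true) with hφdef
      have hinj : Set.InjOn φ (Finset.univ.filter good : Finset (Fin n)) := by
        have key : ∀ i i' : Fin n, i < i' → good i → good i' → φ i ≠ φ i' := by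
          intro i i' hlt hgi hgi'
          intro heq
          rw [hφdef] at heq
          simp only [dif_pos hgi, dif_pos hgi', Prod.mk.injEq] at heq
          obtain ⟨hj, hb⟩ := heq
          obtain ⟨hle1, hle2⟩ := hgi.choose_spec
          obtain ⟨hle1', hle2'⟩ := hgi'.choose_spec
          have hmono : t i.succ ≤ t i'.castSucc := by
            apply ht.monotone
            rw [Fin.le_def]
            have := hlt
            rw [Fin.lt_def] at this
            simpa using this
          rw [hj] at hle2
          have heq1 : s hgi'.choose = t i'.castSucc := le_antisymm
            (le_trans hle2 hmono) hle1'
          have hne1 : s hgi'.choose ≠ t i.castSucc := by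
            intro hcon
            have h4 : t i.castSucc < t i.succ := ht (Fin.castSucc_lt_succ (i := i))
            rw [hcon] at hle2
            linarith [le_trans hle2 hmono, heq1 ▸ (le_refl (t i'.castSucc))]
          rw [hj] at hb
          rw [decide_eq_decide] at hb
          exact hne1 (hb.mpr heq1)
        intro i hi i' hi' hφeq
        simp only [Finset.coe_filter, Set.mem_setOf_eq, Finset.mem_univ, true_and] at hi hi'
        by_contra hne
        rcases lt_or_gt_of_ne hne with h | h
        · exact key i i' h hi hi' hφeq
        · exact key i' i h hi' hi hφeq.symm
      calc (Finset.univ.filter good).card ≤ (Finset.univ : Finset (Fin (m + 1) × Bool)).card :=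
            Finset.card_le_card_of_injOn φ (fun x _ => Finset.mem_univ _) hinj
        _ = 2 * (m + 1) := by simp [mul_comm]
    calc ∑ i : Fin n, ENNReal.ofReal (|f (t i.succ) - f (t i.castSucc)| - c)
        ≤ ∑ i : Fin n, (if good i then ENNReal.ofReal (2 * K) else 0) :=
          Finset.sum_le_sum fun i _ => hterm i
      _ = ∑ i ∈ Finset.univ.filter good, ENNReal.ofReal (2 * K) :=
          (Finset.sum_filter _ _).symm
      _ = (Finset.univ.filter good).card • ENNReal.ofReal (2 * K) := by
          rw [Finset.sum_const]
      _ = ((Finset.univ.filter good).card : ℝ≥0∞) * ENNReal.ofReal (2 * K) := by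
          rw [nsmul_eq_mul]
      _ ≤ ((2 * (m + 1) : ℕ) : ℝ≥0∞) * ENNReal.ofReal (2 * K) := by
          apply mul_le_mul_left
          exact_mod_cast Nat.cast_le.mpr hcard
  refine lt_of_le_of_lt hbound ?_
  exact ENNReal.mul_lt_top (ENNReal.natCast_lt_top _) ENNReal.ofReal_lt_top

/-- A function `f : [a,b] → ℝ` is regulated iff its truncated variation is finite at every
positive truncation level. -/
theorem regulated_iff_ttv_finite (a b : ℝ) (f : ℝ → ℝ) (hab : a < b) :
    Regulated f a b ↔ ∀ c : ℝ, 0 < c → TTV f a b c < ⊤ := by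
  constructor
  · intro hreg c hc
    obtain ⟨m, s, hs, h0, hl, hosc⟩ := exists_osc_partition f a b c hab hc hreg
    obtain ⟨K, _hK0, hK⟩ := exists_bound f a b c hc m s hs h0 hl hosc
    exact ttv_lt_top_of_osc f a b c hc m s hs h0 hl hosc K hK
  · intro h
    exact regulated_of_ttv_finite a b f hab h
end

section
/- Let f : [a,b] → ℝ be a regulated function and c > 0. Then UTV^c(f,[a,b]) = inf{UTV^0(g,[a,b]) : g : [a,b] → ℝ, sup_{t ∈ [a,b]} |f(t) − g(t)| ≤ c/2} and DTV^c(f,[a,b]) = inf{DTV^0(g,[a,b]) : g : [a,b] → ℝ, sup_{t ∈ [a,b]} |f(t) − g(t)| ≤ c/2}, and both infima are attained. -/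
open MeasureTheory Filter Set
open scoped ENNReal NNReal

open scoped Topology

noncomputable section
namespace TVAux

def linf (f : ℝ → ℝ) (s t : ℝ) : ℝ := sInf (f '' Set.Icc s t)

def phiF (f : ℝ → ℝ) (r t σ : ℝ) : ℝ := min (f σ - r) (linf f σ t + r)

def BB (f : ℝ → ℝ) (r s t : ℝ) : ℝ := sSup (phiF f r t '' Set.Icc s t)

def lazyG (f : ℝ → ℝ) (a r t : ℝ) : ℝ := max (linf f a t + r) (BB f r a t)

variable {f : ℝ → ℝ} {a b M r : ℝ}

lemma bddBelow_img (hbd : ∀ x ∈ Set.Icc a b, |f x| ≤ M) {s t : ℝ}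
    (hsub : Set.Icc s t ⊆ Set.Icc a b) : BddBelow (f '' Set.Icc s t) := by
  refine ⟨-M, ?_⟩
  rintro y ⟨z, hz, rfl⟩
  exact (abs_le.mp (hbd z (hsub hz))).1

lemma linf_le (hbd : ∀ x ∈ Set.Icc a b, |f x| ≤ M) {s t x : ℝ}
    (hsub : Set.Icc s t ⊆ Set.Icc a b) (hx : x ∈ Set.Icc s t) : linf f s t ≤ f x :=
  csInf_le (bddBelow_img hbd hsub) (mem_image_of_mem f hx)

lemma exists_near_inf {s t ε : ℝ} (hst : s ≤ t) (hε : 0 < ε) :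
    ∃ x ∈ Set.Icc s t, f x < linf f s t + ε := by
  have hne : (f '' Set.Icc s t).Nonempty := (Set.nonempty_Icc.mpr hst).image f
  obtain ⟨y, ⟨x, hx, rfl⟩, hy⟩ := exists_lt_of_csInf_lt hne (by linarith [lt_add_of_pos_right (linf f s t) hε] : linf f s t < linf f s t + ε)
  exact ⟨x, hx, hy⟩

lemma bddAbove_phi (hbd : ∀ x ∈ Set.Icc a b, |f x| ≤ M) (hr : 0 ≤ r) {s u t : ℝ}
    (hsub : Set.Icc s u ⊆ Set.Icc a b) : BddAbove (phiF f r t '' Set.Icc s u) := by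
  refine ⟨M, ?_⟩
  rintro y ⟨σ, hσ, rfl⟩
  have h2 := (abs_le.mp (hbd σ (hsub hσ))).2
  calc phiF f r t σ ≤ f σ - r := min_le_left _ _
    _ ≤ M := by linarith

lemma le_BB (hbd : ∀ x ∈ Set.Icc a b, |f x| ≤ M) (hr : 0 ≤ r) {s t σ : ℝ}
    (hsub : Set.Icc s t ⊆ Set.Icc a b) (hσ : σ ∈ Set.Icc s t) :
    phiF f r t σ ≤ BB f r s t :=
  le_csSup (bddAbove_phi hbd hr hsub) (mem_image_of_mem _ hσ)

lemma BB_le {s t K : ℝ} (hst : s ≤ t) (h : ∀ σ ∈ Set.Icc s t, phiF f r t σ ≤ K) :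
    BB f r s t ≤ K := by
  apply csSup_le ((Set.nonempty_Icc.mpr hst).image _)
  rintro y ⟨σ, hσ, rfl⟩
  exact h σ hσ

lemma linf_self (f : ℝ → ℝ) (t : ℝ) : linf f t t = f t := by simp [linf]

lemma lazyG_ge (hbd : ∀ x ∈ Set.Icc a b, |f x| ≤ M) (hr : 0 ≤ r) {t : ℝ}
    (hat : a ≤ t) (htb : t ≤ b) : f t - r ≤ lazyG f a r t := by
  have hsub : Set.Icc a t ⊆ Set.Icc a b := Set.Icc_subset_Icc le_rfl htb
  have h := le_BB hbd hr hsub (Set.mem_Icc.mpr ⟨hat, le_rfl⟩)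
  rw [phiF, linf_self, min_eq_left (by linarith)] at h
  exact h.trans (le_max_right _ _)

lemma lazyG_le (hbd : ∀ x ∈ Set.Icc a b, |f x| ≤ M) (hr : 0 ≤ r) {t : ℝ}
    (hat : a ≤ t) (htb : t ≤ b) : lazyG f a r t ≤ f t + r := by
  have hsub : Set.Icc a t ⊆ Set.Icc a b := Set.Icc_subset_Icc le_rfl htb
  apply max_le
  · have := linf_le hbd hsub (Set.mem_Icc.mpr ⟨hat, le_rfl⟩)
    linarith
  · apply BB_le hat
    intro σ hσ
    have h1 : linf f σ t ≤ f t := linf_le hbd (Set.Icc_subset_Icc hσ.1 htb)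
      (Set.mem_Icc.mpr ⟨hσ.2, le_rfl⟩)
    calc phiF f r t σ ≤ linf f σ t + r := min_le_right _ _
      _ ≤ f t + r := by linarith

lemma linf_split (hbd : ∀ x ∈ Set.Icc a b, |f x| ≤ M) {s u t : ℝ}
    (h1 : s ≤ u) (h2 : u ≤ t) (hsub : Set.Icc s t ⊆ Set.Icc a b) :
    linf f s t = min (linf f s u) (linf f u t) := by
  have hsub1 : Set.Icc s u ⊆ Set.Icc a b := (Set.Icc_subset_Icc le_rfl h2).trans hsub
  have hsub2 : Set.Icc u t ⊆ Set.Icc a b := (Set.Icc_subset_Icc h1 le_rfl).trans hsub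
  rw [linf, ← Set.Icc_union_Icc_eq_Icc h1 h2, Set.image_union,
    csInf_union (bddBelow_img hbd hsub1) ((Set.nonempty_Icc.mpr h1).image f)
      (bddBelow_img hbd hsub2) ((Set.nonempty_Icc.mpr h2).image f)]
  rfl

lemma csSup_min_const {S : Set ℝ} (hne : S.Nonempty) (hbdd : BddAbove S) (K : ℝ) :
    sSup ((fun x => min x K) '' S) = min (sSup S) K := by
  have hbdd' : BddAbove ((fun x => min x K) '' S) := by
    refine ⟨K, ?_⟩; rintro y ⟨z, _, rfl⟩; exact min_le_right _ _
  apply le_antisymm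
  · apply csSup_le (hne.image _)
    rintro y ⟨x, hx, rfl⟩
    exact min_le_min (le_csSup hbdd hx) le_rfl
  · rcases le_total (sSup S) K with h | h
    · rw [min_eq_left h]
      apply csSup_le hne
      intro x hx
      have hxK : x ≤ K := le_trans (le_csSup hbdd hx) h
      calc x = min x K := (min_eq_left hxK).symm
        _ ≤ _ := le_csSup hbdd' (mem_image_of_mem _ hx)
    · rw [min_eq_right h]
      apply le_of_forall_lt
      intro y hy
      obtain ⟨x, hxS, hyx⟩ := exists_lt_of_lt_csSup hne (lt_of_lt_of_le hy h)
      exact lt_of_lt_of_le (lt_min hyx hy) (le_csSup hbdd' (mem_image_of_mem _ hxS))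

lemma BB_split (hbd : ∀ x ∈ Set.Icc a b, |f x| ≤ M) (hr : 0 ≤ r) {s u t : ℝ}
    (h1 : s ≤ u) (h2 : u ≤ t) (hsub : Set.Icc s t ⊆ Set.Icc a b) :
    BB f r s t = max (min (BB f r s u) (linf f u t + r)) (BB f r u t) := by
  have hsub1 : Set.Icc s u ⊆ Set.Icc a b := (Set.Icc_subset_Icc le_rfl h2).trans hsub
  have hsub2 : Set.Icc u t ⊆ Set.Icc a b := (Set.Icc_subset_Icc h1 le_rfl).trans hsub
  have himg : phiF f r t '' Set.Icc s u
      = (fun x => min x (linf f u t + r)) '' (phiF f r u '' Set.Icc s u) := by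
    rw [Set.image_image]
    apply Set.image_congr
    intro σ hσ
    rw [phiF, phiF, linf_split hbd hσ.2 h2 ((Set.Icc_subset_Icc hσ.1 le_rfl).trans hsub),
      ← min_add_add_right, ← min_assoc]
  rw [BB, ← Set.Icc_union_Icc_eq_Icc h1 h2, Set.image_union,
    csSup_union (bddAbove_phi hbd hr hsub1) ((Set.nonempty_Icc.mpr h1).image _)
      (bddAbove_phi hbd hr hsub2) ((Set.nonempty_Icc.mpr h2).image _),
    himg, csSup_min_const ((Set.nonempty_Icc.mpr h1).image _) (bddAbove_phi hbd hr hsub1)]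
  rfl

lemma lazyG_split (hbd : ∀ x ∈ Set.Icc a b, |f x| ≤ M) (hr : 0 ≤ r) {s t : ℝ}
    (has : a ≤ s) (hst : s ≤ t) (htb : t ≤ b) :
    lazyG f a r t = max (min (lazyG f a r s) (linf f s t + r)) (BB f r s t) := by
  have hsub : Set.Icc a t ⊆ Set.Icc a b := Set.Icc_subset_Icc le_rfl htb
  rw [lazyG, linf_split hbd has hst hsub, BB_split hbd hr has hst hsub,
    ← min_add_add_right, lazyG]
  rw [min_max_distrib_right (linf f a s + r) (BB f r a s) (linf f s t + r), max_assoc]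

lemma exists_low (hbd : ∀ x ∈ Set.Icc a b, |f x| ≤ M) {t ε : ℝ}
    (hat : a ≤ t) (htb : t ≤ b) (hε : 0 < ε) :
    ∃ x ∈ Set.Icc a t, f x < lazyG f a r t - r + ε := by
  have h1 : linf f a t + r ≤ lazyG f a r t := le_max_left _ _
  obtain ⟨x, hx, hxlt⟩ := exists_near_inf (f := f) hat hε
  exact ⟨x, hx, by linarith⟩

lemma exists_fall (hbd : ∀ x ∈ Set.Icc a b, |f x| ≤ M) (hr : 0 ≤ r) {s t ε : ℝ}
    (has : a ≤ s) (hst : s ≤ t) (htb : t ≤ b) (hε : 0 < ε)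
    (h : lazyG f a r t < lazyG f a r s) :
    ∃ x ∈ Set.Icc s t, f x < lazyG f a r t - r + ε := by
  have hsplit := lazyG_split hbd hr has hst htb
  have h1 : min (lazyG f a r s) (linf f s t + r) ≤ lazyG f a r t := by
    rw [hsplit]; exact le_max_left _ _
  have h2 : linf f s t + r ≤ lazyG f a r t :=
    (min_le_iff.mp h1).resolve_left (not_le.mpr h)
  obtain ⟨x, hx, hxlt⟩ := exists_near_inf (f := f) hst hε
  exact ⟨x, hx, by linarith⟩

lemma exists_rise (hbd : ∀ x ∈ Set.Icc a b, |f x| ≤ M) (hr : 0 ≤ r) {s t ε : ℝ}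
    (has : a ≤ s) (hst : s ≤ t) (htb : t ≤ b) (hε : 0 < ε)
    (h : lazyG f a r s < lazyG f a r t) :
    ∃ σ ∈ Set.Icc s t, lazyG f a r t + r - ε < f σ ∧
      (f σ ≤ lazyG f a r t + r ∨ ∃ x ∈ Set.Icc σ t, f x < lazyG f a r t - r + ε) := by
  have hsplit := lazyG_split hbd hr has hst htb
  have hB : BB f r s t = lazyG f a r t := by
    rcases max_choice (min (lazyG f a r s) (linf f s t + r)) (BB f r s t) with hmc | hmc
    · exfalso
      have : lazyG f a r t ≤ lazyG f a r s := by
        rw [hsplit, hmc]; exact min_le_left _ _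
      linarith
    · rw [hsplit, hmc]
  have hne : (phiF f r t '' Set.Icc s t).Nonempty := (Set.nonempty_Icc.mpr hst).image _
  have hsub : Set.Icc s t ⊆ Set.Icc a b := Set.Icc_subset_Icc has htb
  obtain ⟨y, ⟨σ, hσ, rfl⟩, hy⟩ := exists_lt_of_lt_csSup hne
    (show lazyG f a r t - ε < sSup (phiF f r t '' Set.Icc s t) by
      rw [show sSup (phiF f r t '' Set.Icc s t) = BB f r s t from rfl, hB]; linarith)
  have hφle : phiF f r t σ ≤ lazyG f a r t := by
    rw [← hB]; exact le_BB hbd hr hsub hσ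
  have hc1 : lazyG f a r t - ε < f σ - r := lt_of_lt_of_le hy (min_le_left _ _)
  refine ⟨σ, hσ, by linarith, ?_⟩
  rcases le_total (f σ - r) (linf f σ t + r) with hcl | hcl
  · left
    rw [phiF, min_eq_left hcl] at hφle
    linarith
  · right
    rw [phiF, min_eq_right hcl] at hφle
    obtain ⟨x, hx, hxlt⟩ := exists_near_inf (f := f) hσ.2 hε
    exact ⟨x, hx, by linarith⟩

/-! ### Partition bookkeeping -/

def wsum (f : ℝ → ℝ) (c : ℝ) (m : ℕ) (w : Fin (m+1) → ℝ) : ℝ :=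
  ∑ j : Fin m, max (f (w j.succ) - f (w j.castSucc) - c) 0

def StL (f : ℝ → ℝ) (r ε lvl : ℝ) (m : ℕ) (w : Fin (m+1) → ℝ) : Prop :=
  f (w (Fin.last m)) ≤ lvl - r + ε ∧
    ∀ j : Fin m, (j : ℕ) = m - 1 → lvl + r - ε ≤ f (w j.castSucc)

def StH (f : ℝ → ℝ) (r ε lvl : ℝ) (m : ℕ) (w : Fin (m+1) → ℝ) : Prop :=
  ∃ j : Fin m, (j : ℕ) = m - 1 ∧ lvl + r - ε ≤ f (w (Fin.last m)) ∧
    f (w (Fin.last m)) ≤ lvl + r ∧ f (w j.castSucc) ≤ lvl - r + ε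

lemma strictMono_const1 (x : ℝ) : StrictMono (fun _ : Fin 1 => x) := by
  intro i j hij
  exfalso
  have h1 := i.isLt
  have h2 := j.isLt
  rw [Fin.lt_def] at hij
  omega

lemma strictMono_snoc {m : ℕ} {w : Fin (m+1) → ℝ} (hw : StrictMono w) {x : ℝ}
    (hx : w (Fin.last m) < x) : StrictMono (Fin.snoc w x : Fin (m+2) → ℝ) := by
  rw [Fin.strictMono_iff_lt_succ]
  intro i
  refine Fin.lastCases ?_ ?_ i
  · rw [Fin.succ_last, Fin.snoc_last, Fin.snoc_castSucc]
    exact hx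
  · intro j
    rw [Fin.succ_castSucc, Fin.snoc_castSucc, Fin.snoc_castSucc]
    exact hw (Fin.castSucc_lt_succ : j.castSucc < j.succ)

lemma snoc_mem {m : ℕ} {w : Fin (m+1) → ℝ} (hmem : ∀ j, w j ∈ Set.Icc a b) {x : ℝ}
    (hx : x ∈ Set.Icc a b) : ∀ j, (Fin.snoc w x : Fin (m+2) → ℝ) j ∈ Set.Icc a b := by
  intro j
  refine Fin.lastCases ?_ ?_ j
  · rw [Fin.snoc_last]; exact hx
  · intro i; rw [Fin.snoc_castSucc]; exact hmem i

lemma wsum_snoc (f : ℝ → ℝ) (c : ℝ) (m : ℕ) (w : Fin (m+1) → ℝ) (x : ℝ) :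
    wsum f c (m+1) (Fin.snoc w x) = wsum f c m w
      + max (f x - f (w (Fin.last m)) - c) 0 := by
  rw [wsum, Fin.sum_univ_castSucc]
  congr 1
  · apply Finset.sum_congr rfl
    intro j _
    rw [Fin.succ_castSucc, Fin.snoc_castSucc, Fin.snoc_castSucc]
  · rw [Fin.succ_last, Fin.snoc_last, Fin.snoc_castSucc]

lemma wsum_eq_init (f : ℝ → ℝ) (c : ℝ) (m₀ : ℕ) (w : Fin (m₀+2) → ℝ) :
    wsum f c (m₀+1) w = wsum f c m₀ (Fin.init w)
      + max (f (w (Fin.last (m₀+1))) - f (w ((Fin.last m₀).castSucc)) - c) 0 := by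
  conv_lhs => rw [← Fin.snoc_init_self w]
  rw [wsum_snoc]
  simp [Fin.init]

lemma lazy_UTV_le {c : ℝ} (hab : a ≤ b) (hbd : ∀ x ∈ Set.Icc a b, |f x| ≤ M) (hc : 0 < c) :
    UTV (lazyG f a (c/2)) a b 0 ≤ UTV f a b c := by
  have hr : (0:ℝ) ≤ c/2 := by linarith
  set G : ℝ → ℝ := lazyG f a (c/2) with hG
  conv_lhs => rw [UTV]
  refine iSup_le fun n => iSup_le fun t => iSup_le fun ht => iSup_le fun htm => ?_
  refine ENNReal.le_of_forall_pos_le_add fun ε' hε' _ => ?_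
  set εr : ℝ := min (c/4) ((ε' : ℝ) / (2*n+1)) with hεrdef
  have hε'0 : (0:ℝ) < (ε' : ℝ) := hε'
  have hεr0 : 0 < εr := lt_min (by linarith) (by positivity)
  have hεrc : εr < c/2 := lt_of_le_of_lt (min_le_left _ _) (by linarith)
  have hun : ∀ i : ℕ, min i n < n + 1 := fun i => by omega
  set u : ℕ → ℝ := fun i => t ⟨min i n, hun i⟩ with hu
  have humem : ∀ i, u i ∈ Set.Icc a b := fun i => htm _
  have humono : Monotone u := by
    intro i j hij
    apply ht.monotone
    show (⟨min i n, hun i⟩ : Fin (n+1)) ≤ ⟨min j n, hun j⟩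
    simp only [Fin.mk_le_mk]
    omega
  have haub : ∀ i, a ≤ u i := fun i => (humem i).1
  have hub : ∀ i, u i ≤ b := fun i => (humem i).2
  have claim : ∀ k : ℕ, k ≤ n →
      ∃ (m : ℕ) (w : Fin (m+1) → ℝ), StrictMono w ∧ (∀ j, w j ∈ Set.Icc a b) ∧
        w (Fin.last m) ≤ u k ∧
        (∑ i ∈ Finset.range k, max (G (u (i+1)) - G (u i)) 0) ≤ wsum f c m w + 2*k*εr ∧
        (StL f (c/2) εr (G (u k)) m w ∨ StH f (c/2) εr (G (u k)) m w) := by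
    intro k
    induction k with
    | zero =>
      intro _
      obtain ⟨x, hx, hxlt⟩ := exists_low (r := c/2) hbd (haub 0) (hub 0) hεr0
      rw [← hG] at hxlt
      refine ⟨0, fun _ => x, strictMono_const1 x, ?_, hx.2, ?_, Or.inl ⟨hxlt.le, fun j _ => j.elim0⟩⟩
      · intro j
        exact ⟨hx.1, hx.2.trans (hub 0)⟩
      · simp [wsum]
    | succ k ih =>
      intro hk1
      obtain ⟨m, w, hw, hwmem, hwlast, hsum, hstate⟩ := ih (by omega)
      have hsle : u k ≤ u (k+1) := humono (Nat.le_succ k)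
      have hcast : ((k+1 : ℕ) : ℝ) = (k : ℝ) + 1 := by push_cast; ring
      rcases lt_trichotomy (G (u (k+1))) (G (u k)) with hfall | heq | hrise
      · -- fall
        obtain ⟨x, hxmem, hxlt⟩ := exists_fall hbd hr (haub k) hsle (hub (k+1)) hεr0 hfall
        rw [← hG] at hxlt
        have hxab : x ∈ Set.Icc a b := ⟨(haub k).trans hxmem.1, hxmem.2.trans (hub (k+1))⟩
        have h0 : max (G (u (k+1)) - G (u k)) 0 = 0 := max_eq_right (by linarith)
        rcases hstate with ⟨hL1, hL2⟩ | ⟨j0, hj0, hH1, hH2, hH3⟩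
        · -- state L
          cases m with
          | zero =>
            refine ⟨0, fun _ => x, strictMono_const1 x, fun j => hxab, hxmem.2, ?_,
              Or.inl ⟨hxlt.le, fun j _ => j.elim0⟩⟩
            · simp only [wsum, Finset.univ_eq_empty, Finset.sum_empty] at hsum ⊢
              rw [Finset.sum_range_succ, h0]
              rw [hcast]
              linarith
          | succ m₀ =>
            have hpen := hL2 (Fin.last m₀) (by simp)
            have hlt1 : w ((Fin.last m₀).castSucc) < w (Fin.last (m₀+1)) :=
              hw (Fin.castSucc_lt_last _)
            have hxgt : w ((Fin.last m₀).castSucc) < x :=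
              lt_of_lt_of_le hlt1 (hwlast.trans hxmem.1)
            refine ⟨m₀+1, Fin.snoc (Fin.init w) x,
              strictMono_snoc (hw.comp Fin.strictMono_castSucc)
                (by simpa [Fin.init] using hxgt),
              snoc_mem (fun i => hwmem i.castSucc) hxab,
              by rw [Fin.snoc_last]; exact hxmem.2, ?_, Or.inl ⟨?_, ?_⟩⟩
            · have e1 := wsum_eq_init f c m₀ w
              have e2 := wsum_snoc f c m₀ (Fin.init w) x
              have hz1 : max (f (w (Fin.last (m₀+1))) - f (w ((Fin.last m₀).castSucc)) - c) 0 = 0 :=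
                max_eq_right (by linarith)
              have hz2 : max (f x - f (Fin.init w (Fin.last m₀)) - c) 0 = 0 := by
                apply max_eq_right
                have : Fin.init w (Fin.last m₀) = w ((Fin.last m₀).castSucc) := rfl
                rw [this]
                linarith
              rw [Finset.sum_range_succ, h0, e2, hz2, hcast]
              rw [e1, hz1] at hsum
              linarith
            · rw [Fin.snoc_last]
              exact hxlt.le
            · intro j hj
              have hjeq : j = Fin.last m₀ := Fin.ext (by simpa using hj)
              subst hjeq
              rw [Fin.snoc_castSucc]
              have : Fin.init w (Fin.last m₀) = w ((Fin.last m₀).castSucc) := rfl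
              rw [this]
              linarith
        · -- state H
          have hxgt : w (Fin.last m) < x := by
            rcases eq_or_lt_of_le (hwlast.trans hxmem.1) with he | hl
            · exfalso
              rw [← he] at hxlt
              linarith
            · exact hl
          refine ⟨m+1, Fin.snoc w x, strictMono_snoc hw hxgt, snoc_mem hwmem hxab,
            by rw [Fin.snoc_last]; exact hxmem.2, ?_, Or.inl ⟨?_, ?_⟩⟩
          · have e2 := wsum_snoc f c m w x
            have hz2 : max (f x - f (w (Fin.last m)) - c) 0 = 0 :=
              max_eq_right (by linarith)
            rw [Finset.sum_range_succ, h0, e2, hz2, hcast]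
            linarith
          · rw [Fin.snoc_last]
            exact hxlt.le
          · intro j hj
            have hjeq : j = Fin.last m := Fin.ext (by simpa using hj)
            subst hjeq
            rw [Fin.snoc_castSucc]
            linarith
      · -- equal
        refine ⟨m, w, hw, hwmem, hwlast.trans hsle, ?_, ?_⟩
        · have h0 : max (G (u (k+1)) - G (u k)) 0 = 0 :=
            max_eq_right (by rw [heq]; simp)
          rw [Finset.sum_range_succ, h0, hcast]
          linarith
        · rw [heq]
          exact hstate
      · -- rise
        obtain ⟨σ, hσmem, hσgt, hcase⟩ :=
          exists_rise hbd hr (haub k) hsle (hub (k+1)) hεr0 hrise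
        rw [← hG] at hσgt hcase
        have hσab : σ ∈ Set.Icc a b := ⟨(haub k).trans hσmem.1, hσmem.2.trans (hub (k+1))⟩
        have hmax : max (G (u (k+1)) - G (u k)) 0 = G (u (k+1)) - G (u k) :=
          max_eq_left (by linarith)
        rcases hstate with ⟨hL1, hL2⟩ | ⟨j0, hj0, hH1, hH2, hH3⟩
        · -- state L : snoc σ
          have hσgtw : w (Fin.last m) < σ := by
            rcases eq_or_lt_of_le (hwlast.trans hσmem.1) with he | hl
            · exfalso
              rw [← he] at hσgt
              linarith
            · exact hl
          have hw1 : StrictMono (Fin.snoc w σ : Fin (m+2) → ℝ) := strictMono_snoc hw hσgtw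
          have hw1mem : ∀ j, (Fin.snoc w σ : Fin (m+2) → ℝ) j ∈ Set.Icc a b :=
            snoc_mem hwmem hσab
          have e2 := wsum_snoc f c m w σ
          have hgainge : f σ - f (w (Fin.last m)) - c > (G (u (k+1)) - G (u k)) - 2*εr := by
            linarith
          rcases hcase with hclean | ⟨x, hxmem, hxlt⟩
          · refine ⟨m+1, Fin.snoc w σ, hw1, hw1mem,
              by rw [Fin.snoc_last]; exact hσmem.2, ?_,
              Or.inr ⟨Fin.last m, by simp, ?_, ?_, ?_⟩⟩
            · rw [Finset.sum_range_succ, hmax, e2, hcast]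
              have hT := le_max_left (f σ - f (w (Fin.last m)) - c) 0
              linarith
            · rw [Fin.snoc_last]
              linarith
            · rw [Fin.snoc_last]
              exact hclean
            · rw [Fin.snoc_castSucc]
              linarith
          · -- unclean : further snoc x
            have hxab : x ∈ Set.Icc a b :=
              ⟨(haub k).trans (hσmem.1.trans hxmem.1), hxmem.2.trans (hub (k+1))⟩
            have hxgtσ : σ < x := by
              rcases eq_or_lt_of_le hxmem.1 with he | hl
              · exfalso
                rw [← he] at hxlt
                linarith
              · exact hl
            have hw2 : StrictMono (Fin.snoc (Fin.snoc w σ) x : Fin (m+3) → ℝ) :=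
              strictMono_snoc hw1 (by rw [Fin.snoc_last]; exact hxgtσ)
            have e3 := wsum_snoc f c (m+1) (Fin.snoc w σ) x
            have hz3 : max (f x - f ((Fin.snoc w σ : Fin (m+2) → ℝ) (Fin.last (m+1))) - c) 0 = 0 := by
              apply max_eq_right
              rw [Fin.snoc_last]
              linarith
            refine ⟨m+2, Fin.snoc (Fin.snoc w σ) x, hw2, snoc_mem hw1mem hxab,
              by rw [Fin.snoc_last]; exact hxmem.2, ?_, Or.inl ⟨?_, ?_⟩⟩
            · rw [Finset.sum_range_succ, hmax, e3, hz3, e2, hcast]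
              have hT := le_max_left (f σ - f (w (Fin.last m)) - c) 0
              linarith
            · rw [Fin.snoc_last]
              exact hxlt.le
            · intro j hj
              have hjeq : j = Fin.last (m+1) := Fin.ext (by simpa using hj)
              subst hjeq
              rw [Fin.snoc_castSucc, Fin.snoc_last]
              linarith
        · -- state H : replace last by σ
          cases m with
          | zero => exact j0.elim0
          | succ m₀ =>
            have hj0eq : j0 = Fin.last m₀ := Fin.ext (by simpa using hj0)
            rw [hj0eq] at hH3
            have hpenlt : w ((Fin.last m₀).castSucc) < w (Fin.last (m₀+1)) :=
              hw (Fin.castSucc_lt_last _)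
            have hσgtpen : w ((Fin.last m₀).castSucc) < σ :=
              lt_of_lt_of_le hpenlt (hwlast.trans hσmem.1)
            have hw1 : StrictMono (Fin.snoc (Fin.init w) σ : Fin (m₀+2) → ℝ) :=
              strictMono_snoc (hw.comp Fin.strictMono_castSucc)
                (by simpa [Fin.init] using hσgtpen)
            have hw1mem : ∀ j, (Fin.snoc (Fin.init w) σ : Fin (m₀+2) → ℝ) j ∈ Set.Icc a b :=
              snoc_mem (fun i => hwmem i.castSucc) hσab
            have e1 := wsum_eq_init f c m₀ w
            have e2 := wsum_snoc f c m₀ (Fin.init w) σ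
            have hinit : Fin.init w (Fin.last m₀) = w ((Fin.last m₀).castSucc) := rfl
            rw [hinit] at e2
            -- gain estimate
            have hkey : max (f σ - f (w ((Fin.last m₀).castSucc)) - c) 0
                ≥ max (f (w (Fin.last (m₀+1))) - f (w ((Fin.last m₀).castSucc)) - c) 0
                  + ((G (u (k+1)) - G (u k)) - 2*εr) := by
              rcases le_total (f (w (Fin.last (m₀+1))) - f (w ((Fin.last m₀).castSucc)) - c) 0
                with ho | ho
              · rw [max_eq_right ho]
                have hT := le_max_left (f σ - f (w ((Fin.last m₀).castSucc)) - c) 0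
                linarith
              · rw [max_eq_left ho]
                rcases le_total (f σ - f (w ((Fin.last m₀).castSucc)) - c) 0 with hn | hn
                · rw [max_eq_right hn]
                  linarith
                · rw [max_eq_left hn]
                  linarith
            have hsum1 : (∑ i ∈ Finset.range (k+1), max (G (u (i+1)) - G (u i)) 0)
                ≤ wsum f c (m₀+1) (Fin.snoc (Fin.init w) σ) + 2*((k+1 : ℕ) : ℝ)*εr := by
              rw [Finset.sum_range_succ, hmax, e2, hcast]
              rw [e1] at hsum
              linarith
            rcases hcase with hclean | ⟨x, hxmem, hxlt⟩
            · refine ⟨m₀+1, Fin.snoc (Fin.init w) σ, hw1, hw1mem,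
                by rw [Fin.snoc_last]; exact hσmem.2, hsum1,
                Or.inr ⟨Fin.last m₀, by simp, ?_, ?_, ?_⟩⟩
              · rw [Fin.snoc_last]
                linarith
              · rw [Fin.snoc_last]
                exact hclean
              · rw [Fin.snoc_castSucc, hinit]
                linarith
            · -- unclean : snoc x on top
              have hxab : x ∈ Set.Icc a b :=
                ⟨(haub k).trans (hσmem.1.trans hxmem.1), hxmem.2.trans (hub (k+1))⟩
              have hxgtσ : σ < x := by
                rcases eq_or_lt_of_le hxmem.1 with he | hl
                · exfalso
                  rw [← he] at hxlt
                  linarith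
                · exact hl
              have hw2 : StrictMono
                  (Fin.snoc (Fin.snoc (Fin.init w) σ) x : Fin (m₀+3) → ℝ) :=
                strictMono_snoc hw1 (by rw [Fin.snoc_last]; exact hxgtσ)
              have e3 := wsum_snoc f c (m₀+1) (Fin.snoc (Fin.init w) σ) x
              have hz3 : max (f x - f ((Fin.snoc (Fin.init w) σ : Fin (m₀+2) → ℝ)
                  (Fin.last (m₀+1))) - c) 0 = 0 := by
                apply max_eq_right
                rw [Fin.snoc_last]
                linarith
              refine ⟨m₀+2, Fin.snoc (Fin.snoc (Fin.init w) σ) x, hw2,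
                snoc_mem hw1mem hxab,
                by rw [Fin.snoc_last]; exact hxmem.2, ?_, Or.inl ⟨?_, ?_⟩⟩
              · rw [e3, hz3]
                linarith
              · rw [Fin.snoc_last]
                exact hxlt.le
              · intro j hj
                have hjeq : j = Fin.last (m₀+1) := Fin.ext (by simpa using hj)
                subst hjeq
                rw [Fin.snoc_castSucc, Fin.snoc_last]
                linarith
  obtain ⟨m, w, hw, hwmem, _, hsum, _⟩ := claim n le_rfl
  have hconv : ∀ i : Fin n, ENNReal.ofReal (G (t i.succ) - G (t i.castSucc) - 0)
      = ENNReal.ofReal (G (u (i.val+1)) - G (u i.val)) := by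
    intro i
    have hi := i.isLt
    have h1 : t i.succ = u (i.val+1) := by
      rw [hu]
      apply congrArg t
      apply Fin.ext
      simp only [Fin.val_succ]
      omega
    have h2 : t i.castSucc = u i.val := by
      rw [hu]
      apply congrArg t
      apply Fin.ext
      simp only [Fin.coe_castSucc]
      omega
    rw [sub_zero, h1, h2]
  have hwUTV : ENNReal.ofReal (wsum f c m w) ≤ UTV f a b c := by
    rw [wsum, ENNReal.ofReal_sum_of_nonneg (fun j _ => le_max_right _ _)]
    have hterm : ∀ j : Fin m, ENNReal.ofReal (max (f (w j.succ) - f (w j.castSucc) - c) 0)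
        = ENNReal.ofReal (f (w j.succ) - f (w j.castSucc) - c) := by
      intro j
      rcases le_total (f (w j.succ) - f (w j.castSucc) - c) 0 with h | h
      · rw [max_eq_right h, ENNReal.ofReal_of_nonpos h, ENNReal.ofReal_zero]
      · rw [max_eq_left h]
    rw [Finset.sum_congr rfl fun j _ => hterm j]
    conv_rhs => rw [UTV]
    exact le_iSup_of_le m (le_iSup_of_le w (le_iSup_of_le hw (le_iSup_of_le hwmem le_rfl)))
  have hofeps : ENNReal.ofReal (2*n*εr) ≤ (ε' : ℝ≥0∞) := by
    have hεr_le : εr ≤ (ε':ℝ)/(2*n+1) := min_le_right _ _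
    have hn0 : (0:ℝ) ≤ (n:ℝ) := Nat.cast_nonneg n
    have hpos : (0:ℝ) < 2*(n:ℝ)+1 := by linarith
    have h1 : 2*(n:ℝ)*εr ≤ 2*(n:ℝ)*((ε':ℝ)/(2*n+1)) :=
      mul_le_mul_of_nonneg_left hεr_le (by linarith)
    have h2 : 2*(n:ℝ)*((ε':ℝ)/(2*n+1)) ≤ (ε':ℝ) := by
      rw [← mul_div_assoc, div_le_iff₀ hpos]
      nlinarith
    calc ENNReal.ofReal (2*n*εr) ≤ ENNReal.ofReal ((ε':ℝ)) :=
          ENNReal.ofReal_le_ofReal (by linarith)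
      _ = (ε' : ℝ≥0∞) := ENNReal.ofReal_coe_nnreal
  calc (∑ i : Fin n, ENNReal.ofReal (G (t i.succ) - G (t i.castSucc) - 0))
      = ∑ i ∈ Finset.range n, ENNReal.ofReal (G (u (i+1)) - G (u i)) := by
        rw [Finset.sum_congr rfl (fun i _ => hconv i)]
        exact Fin.sum_univ_eq_sum_range (fun i => ENNReal.ofReal (G (u (i+1)) - G (u i))) n
    _ ≤ ∑ i ∈ Finset.range n, ENNReal.ofReal (max (G (u (i+1)) - G (u i)) 0) :=
        Finset.sum_le_sum fun i _ => ENNReal.ofReal_le_ofReal (le_max_left _ _)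
    _ = ENNReal.ofReal (∑ i ∈ Finset.range n, max (G (u (i+1)) - G (u i)) 0) :=
        (ENNReal.ofReal_sum_of_nonneg fun i _ => le_max_right _ _).symm
    _ ≤ ENNReal.ofReal (wsum f c m w + 2*n*εr) := ENNReal.ofReal_le_ofReal hsum
    _ ≤ ENNReal.ofReal (wsum f c m w) + ENNReal.ofReal (2*n*εr) := ENNReal.ofReal_add_le
    _ ≤ UTV f a b c + (ε' : ℝ≥0∞) := add_le_add hwUTV hofeps

lemma UTV_le_of_close {c : ℝ} (hc : 0 < c) (g : ℝ → ℝ)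
    (hg : ∀ x ∈ Set.Icc a b, |f x - g x| ≤ c/2) : UTV f a b c ≤ UTV g a b 0 := by
  conv_lhs => rw [UTV]
  refine iSup_le fun n => iSup_le fun t => iSup_le fun ht => iSup_le fun htm => ?_
  refine le_trans ?_
    (le_iSup_of_le n (le_iSup_of_le t (le_iSup_of_le ht (le_iSup_of_le htm le_rfl))) :
      _ ≤ UTV g a b 0)
  apply Finset.sum_le_sum
  intro i _
  apply ENNReal.ofReal_le_ofReal
  have h1 := abs_le.mp (hg _ (htm i.succ))
  have h2 := abs_le.mp (hg _ (htm i.castSucc))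
  linarith [h1.1, h1.2, h2.1, h2.2]

lemma UTV_neg (h : ℝ → ℝ) (x : ℝ) : UTV (fun y => - h y) a b x = DTV h a b x := by
  rw [UTV, DTV]
  refine iSup_congr fun n => iSup_congr fun t => iSup_congr fun _ => iSup_congr fun _ =>
    Finset.sum_congr rfl fun i _ => ?_
  congr 1
  ring

lemma bdd_of_regulated (hab : a < b) (hf : Regulated f a b) :
    ∃ M, ∀ x ∈ Set.Icc a b, |f x| ≤ M := by
  have key : ∀ t ∈ Set.Icc a b, ∃ U ∈ 𝓝 t, ∃ Mt, ∀ x ∈ U ∩ Set.Icc a b, |f x| ≤ Mt := by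
    intro t ht
    have h1 : ∃ U ∈ 𝓝 t, ∃ M1 : ℝ, ∀ x ∈ U, t < x → x ≤ b → |f x| ≤ M1 := by
      by_cases h : t < b
      · obtain ⟨L, hL⟩ := hf.1 t ⟨ht.1, h⟩
        have hmem : Set.Iio (|L| + 1) ∈ 𝓝 |L| := Iio_mem_nhds (by linarith)
        have hev : {x : ℝ | |f x| < |L| + 1} ∈ nhdsWithin t (Set.Ioi t) := hL.abs hmem
        rw [mem_nhdsWithin] at hev
        obtain ⟨U, hUo, htU, hsub⟩ := hev
        exact ⟨U, hUo.mem_nhds htU, |L| + 1, fun x hx h1 _ => le_of_lt (hsub ⟨hx, h1⟩)⟩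
      · exact ⟨Set.univ, univ_mem, 0, fun x _ hlt hle => absurd (lt_of_lt_of_le hlt hle) h⟩
    have h2 : ∃ U ∈ 𝓝 t, ∃ M2 : ℝ, ∀ x ∈ U, a ≤ x → x < t → |f x| ≤ M2 := by
      by_cases h : a < t
      · obtain ⟨L, hL⟩ := hf.2 t ⟨h, ht.2⟩
        have hmem : Set.Iio (|L| + 1) ∈ 𝓝 |L| := Iio_mem_nhds (by linarith)
        have hev : {x : ℝ | |f x| < |L| + 1} ∈ nhdsWithin t (Set.Iio t) := hL.abs hmem
        rw [mem_nhdsWithin] at hev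
        obtain ⟨U, hUo, htU, hsub⟩ := hev
        exact ⟨U, hUo.mem_nhds htU, |L| + 1, fun x hx _ h1 => le_of_lt (hsub ⟨hx, h1⟩)⟩
      · exact ⟨Set.univ, univ_mem, 0, fun x _ hle hlt => absurd (lt_of_le_of_lt hle hlt) h⟩
    obtain ⟨U1, hU1, M1, hM1⟩ := h1
    obtain ⟨U2, hU2, M2, hM2⟩ := h2
    refine ⟨U1 ∩ U2, inter_mem hU1 hU2, max (max M1 M2) |f t|, ?_⟩
    rintro x ⟨⟨hx1, hx2⟩, hxab⟩
    rcases lt_trichotomy x t with hlt | rfl | hgt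
    · exact le_trans (hM2 x hx2 hxab.1 hlt) (le_max_of_le_left (le_max_right M1 M2))
    · exact le_max_right _ _
    · exact le_trans (hM1 x hx1 hgt hxab.2) (le_max_of_le_left (le_max_left M1 M2))
  choose U hU Mt hMt using key
  obtain ⟨T, hT⟩ := (isCompact_Icc (a := a) (b := b)).elim_nhds_subcover' U hU
  have hTim := Finset.exists_le (T.image fun t : ↑(Set.Icc a b) => Mt t.1 t.2)
  obtain ⟨Mx, hMx⟩ := hTim
  refine ⟨Mx, fun x hx => ?_⟩
  have := hT hx
  simp only [Set.mem_iUnion] at this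
  obtain ⟨ti, hti, hxU⟩ := this
  exact (hMt ti.1 ti.2 x ⟨hxU, hx⟩).trans
    (hMx _ (Finset.mem_image_of_mem _ hti))

lemma main_utv {c : ℝ} (hab : a < b) (hbd : ∀ x ∈ Set.Icc a b, |f x| ≤ M) (hc : 0 < c) :
    ∃ g : ℝ → ℝ, (∀ x ∈ Set.Icc a b, |f x - g x| ≤ c/2) ∧ UTV g a b 0 ≤ UTV f a b c := by
  have hr : (0:ℝ) ≤ c/2 := by linarith
  refine ⟨lazyG f a (c/2), fun x hx => ?_, lazy_UTV_le hab.le hbd hc⟩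
  have h1 := lazyG_ge hbd hr hx.1 hx.2
  have h2 := lazyG_le hbd hr hx.1 hx.2
  rw [abs_le]
  constructor <;> linarith

end TVAux
end

/-- Variational property of the upward and downward truncated variations: for regulated `f`
and `c > 0`, `UTV^c(f,[a,b])` (resp. `DTV^c(f,[a,b])`) is the attained infimum of the
positive (resp. negative) variations of functions uniformly approximating `f` with
accuracy `c/2`. -/
theorem utv_dtv_eq_inf (a b c : ℝ) (f : ℝ → ℝ) (hab : a < b)
    (hf : Regulated f a b) (hc : 0 < c) :
    (UTV f a b c =
      ⨅ (g : ℝ → ℝ) (_ : ∀ t ∈ Set.Icc a b, |f t - g t| ≤ c / 2), UTV g a b 0) ∧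
    (∃ g : ℝ → ℝ, (∀ t ∈ Set.Icc a b, |f t - g t| ≤ c / 2) ∧ UTV g a b 0 = UTV f a b c) ∧
    (DTV f a b c =
      ⨅ (g : ℝ → ℝ) (_ : ∀ t ∈ Set.Icc a b, |f t - g t| ≤ c / 2), DTV g a b 0) ∧
    (∃ g : ℝ → ℝ, (∀ t ∈ Set.Icc a b, |f t - g t| ≤ c / 2) ∧ DTV g a b 0 = DTV f a b c) := by
  obtain ⟨M, hbd⟩ := TVAux.bdd_of_regulated hab hf
  obtain ⟨g1, hadm1, hle1⟩ := TVAux.main_utv hab hbd hc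
  have hge1 : ∀ g' : ℝ → ℝ, (∀ t ∈ Set.Icc a b, |f t - g' t| ≤ c / 2) →
      UTV f a b c ≤ UTV g' a b 0 := fun g' hg' => TVAux.UTV_le_of_close hc g' hg'
  have hbd2 : ∀ x ∈ Set.Icc a b, |(fun y => - f y) x| ≤ M := fun x hx => by
    simpa [abs_neg] using hbd x hx
  obtain ⟨g2, hadm2, hle2⟩ := TVAux.main_utv (f := fun y => - f y) hab hbd2 hc
  have hDTVf : UTV (fun y => - f y) a b c = DTV f a b c := TVAux.UTV_neg f c
  set g2' : ℝ → ℝ := fun y => - g2 y with hg2'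
  have hadm2' : ∀ t ∈ Set.Icc a b, |f t - g2' t| ≤ c / 2 := by
    intro t ht
    have h := hadm2 t ht
    have heq : f t - g2' t = -((fun y => - f y) t - g2 t) := by
      simp only [hg2']
      ring
    rw [heq, abs_neg]
    exact h
  have hDTVg2 : DTV g2' a b 0 = UTV g2 a b 0 := by
    rw [← TVAux.UTV_neg g2' 0]
    have hfun : (fun y => - g2' y) = g2 := funext fun y => by simp [hg2']
    rw [hfun]
  have hge2 : ∀ g' : ℝ → ℝ, (∀ t ∈ Set.Icc a b, |f t - g' t| ≤ c / 2) →
      DTV f a b c ≤ DTV g' a b 0 := by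
    intro g' hg'
    rw [← hDTVf, ← TVAux.UTV_neg g' 0]
    apply TVAux.UTV_le_of_close hc
    intro x hx
    have h := hg' x hx
    have heq : (fun y => - f y) x - (fun y => - g' y) x = -(f x - g' x) := by
      simp only []
      ring
    rw [heq, abs_neg]
    exact h
  have hle2' : DTV g2' a b 0 ≤ DTV f a b c := by
    rw [hDTVg2, ← hDTVf]
    exact hle2
  refine ⟨?_, ⟨g1, hadm1, le_antisymm hle1 (hge1 g1 hadm1)⟩, ?_,
    ⟨g2', hadm2', le_antisymm hle2' (hge2 g2' hadm2')⟩⟩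
  · apply le_antisymm
    · exact le_iInf fun g' => le_iInf fun hg' => hge1 g' hg'
    · exact iInf_le_of_le g1 (iInf_le_of_le hadm1 hle1)
  · apply le_antisymm
    · exact le_iInf fun g' => le_iInf fun hg' => hge2 g' hg'
    · exact iInf_le_of_le g2' (iInf_le_of_le hadm2' hle2')
end

section
/- Let f : [a,b] → ℝ be a regulated function and c > 0. Then the truncated variation decomposes as the sum of the upward and downward truncated variations: TTV^c(f,[a,b]) = UTV^c(f,[a,b]) + DTV^c(f,[a,b]). -/
open MeasureTheory Filter Set
open scoped ENNReal NNReal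

noncomputable section TTVAuxSec
namespace TTVAux

open Set

/-! ### Weights of signed/unsigned interval pairs -/

def up (f : ℝ → ℝ) (c : ℝ) (x : ℝ × ℝ) : ℝ := f x.2 - f x.1 - c
def dn (f : ℝ → ℝ) (c : ℝ) (x : ℝ × ℝ) : ℝ := f x.1 - f x.2 - c
def upsum (f : ℝ → ℝ) (c : ℝ) (P : List (ℝ × ℝ)) : ℝ :=
  (P.map fun x => max (up f c x) 0).sum
def dnsum (f : ℝ → ℝ) (c : ℝ) (Q : List (ℝ × ℝ)) : ℝ :=
  (Q.map fun x => max (dn f c x) 0).sum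
def wt (f : ℝ → ℝ) (c : ℝ) (x : Bool × ℝ × ℝ) : ℝ :=
  (if x.1 then f x.2.2 - f x.2.1 else f x.2.1 - f x.2.2) - c
def wsum (f : ℝ → ℝ) (c : ℝ) (R : List (Bool × ℝ × ℝ)) : ℝ :=
  (R.map (wt f c)).sum

def AdmL (lo hi : ℝ) : List (ℝ × ℝ) → Prop
  | [] => True
  | x :: L => lo ≤ x.1 ∧ x.1 < x.2 ∧ x.2 ≤ hi ∧ AdmL x.2 hi L

def Adm (lo hi : ℝ) : List (Bool × ℝ × ℝ) → Prop
  | [] => True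
  | x :: L => lo ≤ x.2.1 ∧ x.2.1 < x.2.2 ∧ x.2.2 ≤ hi ∧ Adm x.2.2 hi L

lemma admL_nil {lo hi : ℝ} : AdmL lo hi [] := trivial
lemma admL_cons {lo hi : ℝ} {x : ℝ × ℝ} {L : List (ℝ × ℝ)} :
    AdmL lo hi (x :: L) ↔ lo ≤ x.1 ∧ x.1 < x.2 ∧ x.2 ≤ hi ∧ AdmL x.2 hi L := Iff.rfl
lemma adm_cons {lo hi : ℝ} {x : Bool × ℝ × ℝ} {L : List (Bool × ℝ × ℝ)} :
    Adm lo hi (x :: L) ↔ lo ≤ x.2.1 ∧ x.2.1 < x.2.2 ∧ x.2.2 ≤ hi ∧ Adm x.2.2 hi L := Iff.rfl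

lemma AdmL_mono {lo lo' hi : ℝ} {L : List (ℝ × ℝ)} (h : lo' ≤ lo) (hL : AdmL lo hi L) :
    AdmL lo' hi L := by
  cases L with
  | nil => trivial
  | cons x L => exact ⟨h.trans hL.1, hL.2.1, hL.2.2.1, hL.2.2.2⟩

lemma Adm_mono {lo lo' hi : ℝ} {L : List (Bool × ℝ × ℝ)} (h : lo' ≤ lo) (hL : Adm lo hi L) :
    Adm lo' hi L := by
  cases L with
  | nil => trivial
  | cons x L => exact ⟨h.trans hL.1, hL.2.1, hL.2.2.1, hL.2.2.2⟩

lemma upsum_cons (f : ℝ → ℝ) (c : ℝ) (x : ℝ × ℝ) (L : List (ℝ × ℝ)) :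
    upsum f c (x :: L) = max (up f c x) 0 + upsum f c L := by simp [upsum]
lemma dnsum_cons (f : ℝ → ℝ) (c : ℝ) (x : ℝ × ℝ) (L : List (ℝ × ℝ)) :
    dnsum f c (x :: L) = max (dn f c x) 0 + dnsum f c L := by simp [dnsum]
lemma wsum_cons (f : ℝ → ℝ) (c : ℝ) (x : Bool × ℝ × ℝ) (L : List (Bool × ℝ × ℝ)) :
    wsum f c (x :: L) = wt f c x + wsum f c L := by simp [wsum]

lemma upsum_nonneg (f : ℝ → ℝ) (c : ℝ) (P : List (ℝ × ℝ)) : 0 ≤ upsum f c P := by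
  apply List.sum_nonneg
  rintro y hy
  obtain ⟨x, -, rfl⟩ := List.mem_map.mp hy
  exact le_max_right _ _

lemma dnsum_nonneg (f : ℝ → ℝ) (c : ℝ) (Q : List (ℝ × ℝ)) : 0 ≤ dnsum f c Q := by
  apply List.sum_nonneg
  rintro y hy
  obtain ⟨x, -, rfl⟩ := List.mem_map.mp hy
  exact le_max_right _ _

/-! ### Negation symmetry -/

def bflip (x : Bool × ℝ × ℝ) : Bool × ℝ × ℝ := (!x.1, x.2)

lemma up_neg (f : ℝ → ℝ) (c : ℝ) (x : ℝ × ℝ) : up (fun t => -f t) c x = dn f c x := by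
  simp [up, dn]; ring

lemma dn_neg (f : ℝ → ℝ) (c : ℝ) (x : ℝ × ℝ) : dn (fun t => -f t) c x = up f c x := by
  simp [up, dn]; ring

lemma upsum_neg (f : ℝ → ℝ) (c : ℝ) (P : List (ℝ × ℝ)) :
    upsum (fun t => -f t) c P = dnsum f c P := by
  unfold upsum dnsum
  congr 1
  exact List.map_congr_left fun x _ => by rw [up_neg]

lemma dnsum_neg (f : ℝ → ℝ) (c : ℝ) (P : List (ℝ × ℝ)) :
    dnsum (fun t => -f t) c P = upsum f c P := by
  unfold upsum dnsum
  congr 1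
  exact List.map_congr_left fun x _ => by rw [dn_neg]

lemma wt_bflip (f : ℝ → ℝ) (c : ℝ) (x : Bool × ℝ × ℝ) :
    wt f c (bflip x) = wt (fun t => -f t) c x := by
  rcases x with ⟨b, p, q⟩
  cases b <;> simp [wt, bflip] <;> ring

lemma wsum_map_bflip (f : ℝ → ℝ) (c : ℝ) (R : List (Bool × ℝ × ℝ)) :
    wsum f c (R.map bflip) = wsum (fun t => -f t) c R := by
  unfold wsum
  rw [List.map_map]
  congr 1
  exact List.map_congr_left fun x _ => by simp only [Function.comp_apply, wt_bflip]

lemma Adm_map_bflip {lo hi : ℝ} {R : List (Bool × ℝ × ℝ)} (h : Adm lo hi R) :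
    Adm lo hi (R.map bflip) := by
  induction R generalizing lo with
  | nil => trivial
  | cons x L ih => exact ⟨h.1, h.2.1, h.2.2.1, ih h.2.2.2⟩

/-! ### Trivial single-direction chains -/

lemma exists_all_dn (f : ℝ → ℝ) (c hi : ℝ) :
    ∀ (Q : List (ℝ × ℝ)) (lo : ℝ), AdmL lo hi Q →
      ∃ R, Adm lo hi R ∧ dnsum f c Q ≤ wsum f c R := by
  intro Q
  induction Q with
  | nil => exact fun lo _ => ⟨[], trivial, by simp [dnsum, wsum]⟩
  | cons x Q' ih =>
    intro lo hQ
    obtain ⟨h1, h2, h3, h4⟩ := hQ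
    obtain ⟨R', hR', hs⟩ := ih x.2 h4
    by_cases hx : 0 < dn f c x
    · refine ⟨(false, x) :: R', ⟨h1, h2, h3, hR'⟩, ?_⟩
      rw [dnsum_cons, wsum_cons, max_eq_left hx.le]
      have : wt f c (false, x) = dn f c x := by simp [wt, dn]
      rw [this]; linarith
    · refine ⟨R', Adm_mono (h1.trans h2.le) hR', ?_⟩
      rw [dnsum_cons, max_eq_right (not_lt.mp hx)]
      linarith

lemma exists_all_up (f : ℝ → ℝ) (c hi : ℝ) :
    ∀ (P : List (ℝ × ℝ)) (lo : ℝ), AdmL lo hi P →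
      ∃ R, Adm lo hi R ∧ upsum f c P ≤ wsum f c R := by
  intro P
  induction P with
  | nil => exact fun lo _ => ⟨[], trivial, by simp [upsum, wsum]⟩
  | cons x P' ih =>
    intro lo hP
    obtain ⟨h1, h2, h3, h4⟩ := hP
    obtain ⟨R', hR', hs⟩ := ih x.2 h4
    by_cases hx : 0 < up f c x
    · refine ⟨(true, x) :: R', ⟨h1, h2, h3, hR'⟩, ?_⟩
      rw [upsum_cons, wsum_cons, max_eq_left hx.le]
      have : wt f c (true, x) = up f c x := by simp [wt, up]
      rw [this]; linarith
    · refine ⟨R', Adm_mono (h1.trans h2.le) hR', ?_⟩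
      rw [upsum_cons, max_eq_right (not_lt.mp hx)]
      linarith

/-! ### The key combinatorial step -/

lemma step (c : ℝ) (hc : 0 ≤ c) (hi : ℝ) (n : ℕ)
    (IH : ∀ (f : ℝ → ℝ) (lo : ℝ) (P Q : List (ℝ × ℝ)),
      P.length + Q.length ≤ n → AdmL lo hi P → AdmL lo hi Q →
      ∃ R, Adm lo hi R ∧ upsum f c P + dnsum f c Q ≤ wsum f c R)
    (f : ℝ → ℝ) (lo p q u v : ℝ) (P' Q' : List (ℝ × ℝ))
    (hlen : P'.length + Q'.length + 1 ≤ n)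
    (hP : AdmL lo hi ((p, q) :: P')) (hQ : AdmL lo hi ((u, v) :: Q'))
    (hwp : 0 < up f c (p, q)) (hwd : 0 < dn f c (u, v)) (hpu : p ≤ u) :
    ∃ R, Adm lo hi R ∧ upsum f c ((p, q) :: P') + dnsum f c ((u, v) :: Q') ≤ wsum f c R := by
  obtain ⟨hlp, hpq, hqhi, hP'⟩ := hP
  obtain ⟨hlu, huv, hvhi, hQ'⟩ := hQ
  have hup' : up f c (p, q) = f q - f p - c := rfl
  have hdn' : dn f c (u, v) = f u - f v - c := rfl
  rw [hup'] at hwp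
  rw [hdn'] at hwd
  rw [upsum_cons, dnsum_cons, hup', hdn', max_eq_left hwp.le, max_eq_left hwd.le]
  by_cases hqu : q ≤ u
  · -- up-head entirely before down-head
    obtain ⟨R', hR', hs'⟩ := IH f q P' ((u, v) :: Q')
      (by simp only [List.length_cons]; omega) hP' ⟨hqu, huv, hvhi, hQ'⟩
    refine ⟨(true, p, q) :: R', ⟨hlp, hpq, hqhi, hR'⟩, ?_⟩
    rw [wsum_cons]
    have hw : wt f c (true, p, q) = f q - f p - c := rfl
    rw [dnsum_cons, hdn', max_eq_left hwd.le] at hs'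
    rw [hw]; linarith
  · push_neg at hqu   -- u < q
    by_cases hqv : q ≤ v
    · by_cases hfu : f q ≤ f u
      · -- shrink the up interval to (p, u)
        have hplt : p < u := by
          rcases lt_or_eq_of_le hpu with h | h
          · exact h
          · exfalso; rw [h] at hwp; linarith
        obtain ⟨R', hR', hs'⟩ := IH f u P' ((u, v) :: Q')
          (by simp only [List.length_cons]; omega) (AdmL_mono hqu.le hP') ⟨le_refl u, huv, hvhi, hQ'⟩
        refine ⟨(true, p, u) :: R', ⟨hlp, hplt, huv.le.trans hvhi, hR'⟩, ?_⟩
        rw [wsum_cons]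
        have hw : wt f c (true, p, u) = f u - f p - c := rfl
        rw [dnsum_cons, hdn', max_eq_left hwd.le] at hs'
        rw [hw]; linarith
      · -- shift the down interval to (q, v)
        push_neg at hfu   -- f u < f q
        have hqv' : q < v := by
          rcases lt_or_eq_of_le hqv with h | h
          · exact h
          · exfalso; rw [h] at hfu; linarith
        obtain ⟨R', hR', hs'⟩ := IH f q P' ((q, v) :: Q')
          (by simp only [List.length_cons]; omega) hP' ⟨le_refl q, hqv', hvhi, hQ'⟩
        refine ⟨(true, p, q) :: R', ⟨hlp, hpq, hqhi, hR'⟩, ?_⟩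
        rw [wsum_cons]
        have hw : wt f c (true, p, q) = f q - f p - c := rfl
        rw [dnsum_cons] at hs'
        have hdn2 : dn f c (q, v) = f q - f v - c := rfl
        rw [hdn2] at hs'
        have hmax : f u - f v - c ≤ max (f q - f v - c) 0 :=
          le_trans (by linarith) (le_max_left _ _)
        rw [hw]; linarith
    · -- nested: p ≤ u < v < q ; split the up interval
      push_neg at hqv   -- v < q
      obtain ⟨R', hR', hs'⟩ := IH f v ((v, q) :: P') Q'
        (by simp; omega) ⟨le_refl v, hqv, hqhi, hP'⟩ hQ'
      rw [upsum_cons] at hs'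
      have hup2 : up f c (v, q) = f q - f v - c := rfl
      rw [hup2] at hs'
      have hmax : f q - f v - c ≤ max (f q - f v - c) 0 := le_max_left _ _
      have hwdn : wt f c (false, u, v) = f u - f v - c := rfl
      by_cases hα : p < u ∧ 0 < f u - f p - c
      · refine ⟨(true, p, u) :: (false, u, v) :: R',
          ⟨hlp, hα.1, huv.le.trans hvhi, le_refl u, huv, hvhi, hR'⟩, ?_⟩
        rw [wsum_cons, wsum_cons, hwdn]
        have hw : wt f c (true, p, u) = f u - f p - c := rfl
        rw [hw]; linarith
      · have hα' : f u - f p - c ≤ 0 := by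
          rcases lt_or_eq_of_le hpu with h | h
          · by_contra hcon
            exact hα ⟨h, by linarith⟩
          · rw [← h]; simp; linarith
        refine ⟨(false, u, v) :: R', ⟨hlp.trans hpu, huv, hvhi, hR'⟩, ?_⟩
        rw [wsum_cons, hwdn]
        linarith

/-! ### The core merging lemma -/

lemma core (c : ℝ) (hc : 0 ≤ c) (hi : ℝ) :
    ∀ (n : ℕ) (f : ℝ → ℝ) (lo : ℝ) (P Q : List (ℝ × ℝ)),
      P.length + Q.length ≤ n → AdmL lo hi P → AdmL lo hi Q →
      ∃ R, Adm lo hi R ∧ upsum f c P + dnsum f c Q ≤ wsum f c R := by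
  intro n
  induction n with
  | zero =>
    intro f lo P Q hlen hP hQ
    have hP0 : P = [] := List.length_eq_zero_iff.mp (by omega)
    have hQ0 : Q = [] := List.length_eq_zero_iff.mp (by omega)
    subst hP0; subst hQ0
    exact ⟨[], trivial, by simp [upsum, dnsum, wsum]⟩
  | succ n IH =>
    intro f lo P Q hlen hP hQ
    rcases P with _ | ⟨⟨p, q⟩, P'⟩
    · obtain ⟨R, hR, hs⟩ := exists_all_dn f c hi Q lo hQ
      refine ⟨R, hR, ?_⟩
      have : upsum f c [] = 0 := by simp [upsum]
      rw [this]; linarith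
    rcases Q with _ | ⟨⟨u, v⟩, Q'⟩
    · obtain ⟨R, hR, hs⟩ := exists_all_up f c hi ((p, q) :: P') lo hP
      refine ⟨R, hR, ?_⟩
      have : dnsum f c [] = 0 := by simp [dnsum]
      rw [this]; linarith
    obtain ⟨hlp, hpq, hqhi, hP'⟩ := hP
    obtain ⟨hlu, huv, hvhi, hQ'⟩ := hQ
    simp only [List.length_cons] at hlen
    by_cases hwp : up f c (p, q) ≤ 0
    · obtain ⟨R, hR, hs⟩ := IH f lo P' ((u, v) :: Q') (by simp; omega)
        (AdmL_mono (hlp.trans hpq.le) hP') ⟨hlu, huv, hvhi, hQ'⟩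
      refine ⟨R, hR, ?_⟩
      rw [upsum_cons, max_eq_right hwp]
      linarith
    by_cases hwd : dn f c (u, v) ≤ 0
    · obtain ⟨R, hR, hs⟩ := IH f lo ((p, q) :: P') Q' (by simp; omega)
        ⟨hlp, hpq, hqhi, hP'⟩ (AdmL_mono (hlu.trans huv.le) hQ')
      refine ⟨R, hR, ?_⟩
      rw [dnsum_cons, max_eq_right hwd]
      linarith
    push_neg at hwp hwd
    rcases le_or_gt p u with hpu | hup
    · exact step c hc hi n IH f lo p q u v P' Q' (by omega)
        ⟨hlp, hpq, hqhi, hP'⟩ ⟨hlu, huv, hvhi, hQ'⟩ hwp hwd hpu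
    · -- mirror case via f ↦ -f
      have hw1 : 0 < up (fun t => -f t) c (u, v) := by rw [up_neg]; exact hwd
      have hw2 : 0 < dn (fun t => -f t) c (p, q) := by rw [dn_neg]; exact hwp
      obtain ⟨R, hR, hs⟩ := step c hc hi n IH (fun t => -f t) lo u v p q Q' P' (by omega)
        ⟨hlu, huv, hvhi, hQ'⟩ ⟨hlp, hpq, hqhi, hP'⟩ hw1 hw2 hup.le
      refine ⟨R.map bflip, Adm_map_bflip hR, ?_⟩
      rw [wsum_map_bflip]
      rw [upsum_neg, dnsum_neg] at hs
      linarith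


/-! ### Flattened partition suprema -/

open scoped ENNReal

def Pt (lo hi : ℝ) : Type :=
  Σ n : ℕ, {t : Fin (n + 1) → ℝ // StrictMono t ∧ ∀ i, t i ∈ Set.Icc lo hi}

lemma nonempty_Pt {lo hi : ℝ} (h : lo ≤ hi) : Nonempty (Pt lo hi) :=
  ⟨⟨0, ⟨fun _ => lo, fun i j hij => absurd hij (by
      have hi := i.isLt
      have hj := j.isLt
      rw [Fin.lt_def]
      omega),
    fun _ => ⟨le_refl lo, h⟩⟩⟩⟩

lemma flatten {lo hi : ℝ} (S : ∀ n : ℕ, (Fin (n + 1) → ℝ) → ℝ≥0∞) :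
    (⨆ (n : ℕ) (t : Fin (n + 1) → ℝ) (_ : StrictMono t) (_ : ∀ i, t i ∈ Set.Icc lo hi), S n t)
      = ⨆ x : Pt lo hi, S x.1 x.2.1 := by
  apply le_antisymm
  · exact iSup_le fun n => iSup_le fun t => iSup_le fun h1 => iSup_le fun h2 =>
      le_iSup_of_le ⟨n, t, h1, h2⟩ le_rfl
  · exact iSup_le fun x =>
      le_iSup_of_le x.1 (le_iSup_of_le x.2.1 (le_iSup_of_le x.2.2.1
        (le_iSup_of_le x.2.2.2 le_rfl)))

/-! ### Fin.cons helpers -/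

lemma strictMono_cons {m : ℕ} {x : ℝ} {h : Fin (m + 1) → ℝ}
    (hm : StrictMono h) (hx : x < h 0) : StrictMono (Fin.cons x h : Fin (m + 2) → ℝ) := by
  intro i j hij
  rcases Fin.eq_zero_or_eq_succ j with rfl | ⟨j', rfl⟩
  · exact absurd hij (Fin.not_lt_zero i)
  rcases Fin.eq_zero_or_eq_succ i with rfl | ⟨i', rfl⟩
  · rw [Fin.cons_zero, Fin.cons_succ]
    exact hx.trans_le (hm.monotone (Fin.zero_le j'))
  · rw [Fin.cons_succ, Fin.cons_succ]
    exact hm (Fin.succ_lt_succ_iff.mp hij)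

lemma mem_cons_Icc {m : ℕ} {x lo hi : ℝ} {h : Fin (m + 1) → ℝ}
    (hx : x ∈ Set.Icc lo hi) (hh : ∀ i, h i ∈ Set.Icc lo hi) :
    ∀ i : Fin (m + 2), (Fin.cons x h : Fin (m + 2) → ℝ) i ∈ Set.Icc lo hi := by
  intro i
  rcases Fin.eq_zero_or_eq_succ i with rfl | ⟨j, rfl⟩
  · rwa [Fin.cons_zero]
  · rw [Fin.cons_succ]; exact hh j

lemma incSum_cons {M : Type*} [AddCommMonoid M] (F : ℝ → ℝ → M) {m : ℕ}
    (x : ℝ) (h : Fin (m + 1) → ℝ) :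
    ∑ i : Fin (m + 1), F ((Fin.cons x h : Fin (m + 2) → ℝ) i.castSucc)
        ((Fin.cons x h : Fin (m + 2) → ℝ) i.succ)
      = F x (h 0) + ∑ i : Fin m, F (h i.castSucc) (h i.succ) := by
  rw [Fin.sum_univ_succ]
  simp only [Fin.castSucc_zero, Fin.cons_zero, ← Fin.succ_castSucc, Fin.cons_succ]

lemma incSum_cons' (f : ℝ → ℝ) (c : ℝ) {m : ℕ} (x : ℝ) (h : Fin (m + 1) → ℝ) :
    ∑ i : Fin (m + 1),
        ENNReal.ofReal (|f ((Fin.cons x h : Fin (m + 2) → ℝ) i.succ)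
          - f ((Fin.cons x h : Fin (m + 2) → ℝ) i.castSucc)| - c)
      = ENNReal.ofReal (|f (h 0) - f x| - c)
        + ∑ i : Fin m, ENNReal.ofReal (|f (h i.succ) - f (h i.castSucc)| - c) :=
  incSum_cons (fun a b => ENNReal.ofReal (|f b - f a| - c)) x h

/-! ### Partition to chain -/

def partList {n : ℕ} (t : Fin (n + 1) → ℝ) : List (ℝ × ℝ) :=
  List.ofFn fun i : Fin n => (t i.castSucc, t i.succ)

lemma partList_succ {n : ℕ} (t : Fin (n + 2) → ℝ) :
    partList t = (t 0, t 1) :: partList fun i => t i.succ := by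
  unfold partList
  rw [List.ofFn_succ]
  refine congrArg₂ List.cons ?_ (congrArg List.ofFn (funext fun i => ?_))
  · simp
  · simp [← Fin.succ_castSucc]

lemma admL_partList {b : ℝ} : ∀ (n : ℕ) (t : Fin (n + 1) → ℝ), StrictMono t →
    (∀ i, t i ≤ b) → AdmL (t 0) b (partList t) := by
  intro n
  induction n with
  | zero =>
    intro t _ _
    show AdmL (t 0) b (List.ofFn _)
    rw [List.ofFn_zero]
    exact admL_nil
  | succ n ih =>
    intro t hm hmem
    rw [partList_succ]
    refine ⟨le_refl _, hm (Fin.zero_lt_one), hmem 1, ?_⟩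
    show AdmL (t 1) b (partList fun i => t i.succ)
    have h0 : (fun i : Fin (n + 1) => t i.succ) 0 = t 1 := by
      show t (Fin.succ 0) = t 1
      rw [Fin.succ_zero_eq_one]
    have := ih (fun i => t i.succ) (hm.comp fun i j hij => Fin.succ_lt_succ_iff.mpr hij)
      (fun i => hmem i.succ)
    rwa [Fin.succ_zero_eq_one] at this

lemma upsum_partList (f : ℝ → ℝ) (c : ℝ) {n : ℕ} (t : Fin (n + 1) → ℝ) :
    upsum f c (partList t) = ∑ i : Fin n, max (f (t i.succ) - f (t i.castSucc) - c) 0 := by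
  unfold upsum partList
  rw [List.map_ofFn, List.sum_ofFn]
  rfl

lemma dnsum_partList (f : ℝ → ℝ) (c : ℝ) {n : ℕ} (t : Fin (n + 1) → ℝ) :
    dnsum f c (partList t) = ∑ i : Fin n, max (f (t i.castSucc) - f (t i.succ) - c) 0 := by
  unfold dnsum partList
  rw [List.map_ofFn, List.sum_ofFn]
  rfl

lemma ofReal_eq_ofReal_max (x : ℝ) : ENNReal.ofReal x = ENNReal.ofReal (max x 0) := by
  rcases le_total x 0 with h | h
  · rw [max_eq_right h, ENNReal.ofReal_eq_zero.mpr h, ENNReal.ofReal_zero]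
  · rw [max_eq_left h]

lemma sum_ofReal_max {n : ℕ} (g : Fin n → ℝ) :
    ∑ i, ENNReal.ofReal (g i) = ENNReal.ofReal (∑ i, max (g i) 0) := by
  rw [ENNReal.ofReal_sum_of_nonneg fun i _ => le_max_right _ _]
  exact Finset.sum_congr rfl fun i _ => ofReal_eq_ofReal_max _

/-! ### Chain to truncated variation -/

def TTVfrom (f : ℝ → ℝ) (lo hi c : ℝ) : ℝ≥0∞ :=
  ⨆ (n : ℕ) (t : Fin (n + 1) → ℝ) (_ : StrictMono t) (_ : ∀ i, t i ∈ Set.Icc lo hi),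
    ∑ i : Fin n, ENNReal.ofReal (|f (t i.succ) - f (t i.castSucc)| - c)

lemma prepend (f : ℝ → ℝ) (c : ℝ) {lo p q hi : ℝ} (h1 : lo ≤ p) (h2 : p < q) (h3 : q ≤ hi) :
    ENNReal.ofReal (|f q - f p| - c) + TTVfrom f q hi c ≤ TTVfrom f lo hi c := by
  haveI : Nonempty (Pt q hi) := nonempty_Pt h3
  rw [show TTVfrom f q hi c = ⨆ x : Pt q hi,
      ∑ i : Fin x.1, ENNReal.ofReal (|f (x.2.1 i.succ) - f (x.2.1 i.castSucc)| - c) from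
    flatten _]
  rw [ENNReal.add_iSup]
  refine iSup_le ?_
  rintro ⟨n, t, hm, hmem⟩
  have hploc : p ∈ Set.Icc lo hi := ⟨h1, h2.le.trans h3⟩
  have hqloc : q ∈ Set.Icc lo hi := ⟨h1.trans h2.le, h3⟩
  have hmem' : ∀ i, t i ∈ Set.Icc lo hi :=
    fun i => ⟨(h1.trans h2.le).trans (hmem i).1, (hmem i).2⟩
  show ENNReal.ofReal (|f q - f p| - c)
      + ∑ i : Fin n, ENNReal.ofReal (|f (t i.succ) - f (t i.castSucc)| - c)
    ≤ TTVfrom f lo hi c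
  by_cases h0 : t 0 = q
  · refine le_trans ?_ (le_iSup_of_le (n + 1) (le_iSup_of_le (Fin.cons p t)
      (le_iSup_of_le (strictMono_cons hm (h0 ▸ h2)) (le_iSup_of_le
        (mem_cons_Icc hploc hmem') le_rfl))))
    rw [incSum_cons' f c p t, h0]
  · have h0' : q < t 0 := lt_of_le_of_ne (hmem 0).1 (Ne.symm h0)
    refine le_trans ?_ (le_iSup_of_le (n + 2) (le_iSup_of_le (Fin.cons p (Fin.cons q t))
      (le_iSup_of_le (strictMono_cons (strictMono_cons hm h0') (by rwa [Fin.cons_zero]))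
        (le_iSup_of_le (mem_cons_Icc hploc (mem_cons_Icc hqloc hmem')) le_rfl))))
    rw [incSum_cons' f c p (Fin.cons q t), incSum_cons' f c q t, Fin.cons_zero]
    exact add_le_add le_rfl (le_add_left le_rfl)

lemma chain_le (f : ℝ → ℝ) (c : ℝ) {hi : ℝ} :
    ∀ (R : List (Bool × ℝ × ℝ)) (lo : ℝ), Adm lo hi R →
      ENNReal.ofReal (wsum f c R) ≤ TTVfrom f lo hi c := by
  intro R
  induction R with
  | nil =>
    intro lo _
    have : wsum f c [] = 0 := by simp [wsum]
    rw [this, ENNReal.ofReal_zero]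
    exact (zero_le : (0 : ℝ≥0∞) ≤ _)
  | cons x R' ih =>
    intro lo hR
    obtain ⟨hl1, hl2, hl3, hl4⟩ := hR
    calc ENNReal.ofReal (wsum f c (x :: R'))
        = ENNReal.ofReal (wt f c x + wsum f c R') := by rw [wsum_cons]
      _ ≤ ENNReal.ofReal (wt f c x) + ENNReal.ofReal (wsum f c R') := ENNReal.ofReal_add_le
      _ ≤ ENNReal.ofReal (|f x.2.2 - f x.2.1| - c) + TTVfrom f x.2.2 hi c := by
          refine add_le_add (ENNReal.ofReal_le_ofReal ?_) (ih _ hl4)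
          rcases x with ⟨b, p, q⟩
          cases b
          · have hwt : wt f c (false, p, q) = f p - f q - c := rfl
            have habs : f p - f q ≤ |f q - f p| := by
              rw [abs_sub_comm]; exact le_abs_self _
            rw [hwt]; simp only
            linarith
          · have hwt : wt f c (true, p, q) = f q - f p - c := rfl
            have habs : f q - f p ≤ |f q - f p| := le_abs_self _
            rw [hwt]; simp only
            linarith
      _ ≤ TTVfrom f lo hi c := prepend f c hl1 hl2 hl3

end TTVAux
end TTVAuxSec

/-- Jordan-type decomposition of the truncated variation: for regulated `f` and `c > 0`,
`TTV^c(f,[a,b]) = UTV^c(f,[a,b]) + DTV^c(f,[a,b])`. -/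
theorem ttv_eq_utv_add_dtv (a b c : ℝ) (f : ℝ → ℝ) (hab : a < b)
    (hf : Regulated f a b) (hc : 0 < c) :
    TTV f a b c = UTV f a b c + DTV f a b c := by
  classical
  have hc0 : 0 ≤ c := hc.le
  have hab' : a ≤ b := hab.le
  apply le_antisymm
  · -- easy direction : `TTV ≤ UTV + DTV`
    have hU : UTV f a b c
        = ⨆ (n : ℕ) (t : Fin (n + 1) → ℝ) (_ : StrictMono t) (_ : ∀ i, t i ∈ Set.Icc a b),
          ∑ i : Fin n, ENNReal.ofReal (f (t i.succ) - f (t i.castSucc) - c) := rfl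
    have hD : DTV f a b c
        = ⨆ (n : ℕ) (t : Fin (n + 1) → ℝ) (_ : StrictMono t) (_ : ∀ i, t i ∈ Set.Icc a b),
          ∑ i : Fin n, ENNReal.ofReal (f (t i.castSucc) - f (t i.succ) - c) := rfl
    have key : ∀ (n : ℕ) (t : Fin (n + 1) → ℝ), StrictMono t → (∀ i, t i ∈ Set.Icc a b) →
        ∑ i : Fin n, ENNReal.ofReal (|f (t i.succ) - f (t i.castSucc)| - c)
          ≤ UTV f a b c + DTV f a b c := by
      intro n t h1 h2
      have hpt : ∀ i : Fin n, ENNReal.ofReal (|f (t i.succ) - f (t i.castSucc)| - c)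
          ≤ ENNReal.ofReal (f (t i.succ) - f (t i.castSucc) - c)
            + ENNReal.ofReal (f (t i.castSucc) - f (t i.succ) - c) := by
        intro i
        rcases abs_cases (f (t i.succ) - f (t i.castSucc)) with ⟨he, _⟩ | ⟨he, _⟩
        · rw [he]; exact le_self_add
        · rw [he]
          have h3 : -(f (t i.succ) - f (t i.castSucc)) - c
              = f (t i.castSucc) - f (t i.succ) - c := by ring
          rw [h3]; exact le_add_self
      calc ∑ i : Fin n, ENNReal.ofReal (|f (t i.succ) - f (t i.castSucc)| - c)
          ≤ ∑ i : Fin n, (ENNReal.ofReal (f (t i.succ) - f (t i.castSucc) - c)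
              + ENNReal.ofReal (f (t i.castSucc) - f (t i.succ) - c)) :=
            Finset.sum_le_sum fun i _ => hpt i
        _ = (∑ i : Fin n, ENNReal.ofReal (f (t i.succ) - f (t i.castSucc) - c))
              + ∑ i : Fin n, ENNReal.ofReal (f (t i.castSucc) - f (t i.succ) - c) :=
            Finset.sum_add_distrib
        _ ≤ UTV f a b c + DTV f a b c := by
            refine add_le_add ?_ ?_
            · rw [hU]
              exact le_iSup_of_le n (le_iSup_of_le t (le_iSup_of_le h1
                (le_iSup_of_le h2 le_rfl)))
            · rw [hD]
              exact le_iSup_of_le n (le_iSup_of_le t (le_iSup_of_le h1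
                (le_iSup_of_le h2 le_rfl)))
    have hT : TTV f a b c
        = ⨆ (n : ℕ) (t : Fin (n + 1) → ℝ) (_ : StrictMono t) (_ : ∀ i, t i ∈ Set.Icc a b),
          ∑ i : Fin n, ENNReal.ofReal (|f (t i.succ) - f (t i.castSucc)| - c) := rfl
    rw [hT]
    exact iSup_le fun n => iSup_le fun t => iSup_le fun h1 => iSup_le fun h2 => key n t h1 h2
  · -- hard direction : `UTV + DTV ≤ TTV`
    haveI : Nonempty (TTVAux.Pt a b) := TTVAux.nonempty_Pt hab'
    have hU : UTV f a b c = ⨆ x : TTVAux.Pt a b,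
        ∑ i : Fin x.1, ENNReal.ofReal (f (x.2.1 i.succ) - f (x.2.1 i.castSucc) - c) := by
      unfold UTV
      exact TTVAux.flatten _
    have hD : DTV f a b c = ⨆ x : TTVAux.Pt a b,
        ∑ i : Fin x.1, ENNReal.ofReal (f (x.2.1 i.castSucc) - f (x.2.1 i.succ) - c) := by
      unfold DTV
      exact TTVAux.flatten _
    rw [hU, hD, ENNReal.iSup_add]
    refine iSup_le fun x => ?_
    rw [ENNReal.add_iSup]
    refine iSup_le fun y => ?_
    obtain ⟨n, t, hmt, hmemt⟩ := x
    obtain ⟨m, s, hms, hmems⟩ := y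
    show (∑ i : Fin n, ENNReal.ofReal (f (t i.succ) - f (t i.castSucc) - c))
        + ∑ i : Fin m, ENNReal.ofReal (f (s i.castSucc) - f (s i.succ) - c) ≤ TTV f a b c
    have hUs : (∑ i : Fin n, ENNReal.ofReal (f (t i.succ) - f (t i.castSucc) - c))
        = ENNReal.ofReal (TTVAux.upsum f c (TTVAux.partList t)) := by
      rw [TTVAux.sum_ofReal_max, TTVAux.upsum_partList]
    have hDs : (∑ i : Fin m, ENNReal.ofReal (f (s i.castSucc) - f (s i.succ) - c))
        = ENNReal.ofReal (TTVAux.dnsum f c (TTVAux.partList s)) := by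
      rw [TTVAux.sum_ofReal_max, TTVAux.dnsum_partList]
    have hPadm : TTVAux.AdmL a b (TTVAux.partList t) :=
      TTVAux.AdmL_mono (hmemt 0).1 (TTVAux.admL_partList n t hmt fun i => (hmemt i).2)
    have hQadm : TTVAux.AdmL a b (TTVAux.partList s) :=
      TTVAux.AdmL_mono (hmems 0).1 (TTVAux.admL_partList m s hms fun i => (hmems i).2)
    obtain ⟨R, hR, hsum⟩ := TTVAux.core c hc0 b
      ((TTVAux.partList t).length + (TTVAux.partList s).length) f a _ _ le_rfl hPadm hQadm
    rw [hUs, hDs,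
      ← ENNReal.ofReal_add (TTVAux.upsum_nonneg f c _) (TTVAux.dnsum_nonneg f c _)]
    calc ENNReal.ofReal (TTVAux.upsum f c (TTVAux.partList t)
          + TTVAux.dnsum f c (TTVAux.partList s))
        ≤ ENNReal.ofReal (TTVAux.wsum f c R) := ENNReal.ofReal_le_ofReal hsum
      _ ≤ TTVAux.TTVfrom f a b c := TTVAux.chain_le f c R a hR
      _ = TTV f a b c := rfl
end
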